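/- arXiv:2012.14263 — 4 statements merged into one kernel-verified Lean document; each statement's English description precedes it below -/
import Mathlib

section
/- A rank-1 lattice Λ(z,M) is a reconstructing rank-1 lattice for a finite frequency set I (i.e. Q_{z,M}(p(\circ)e^{-2πik·\circ}) = \hat{p}_k for all k ∈ I and all p ∈ Π_I) if and only if the residues h·z mod M are pairwise distinct for h ∈ I, equivalently (h−k)·z ≢ 0 (mod M) for all distinct h, k ∈ I. -/
open Complex Finset

lemma exp_fract_eq (d M : ℕ) (hM : 0 < M) (z h : Fin d → ℤ) (j : ℕ) :
    Complex.exp (2 * Real.pi * Complex.I *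
        ∑ i, (h i : ℂ) * Complex.ofReal (Int.fract ((j : ℝ) * (z i : ℝ) / (M : ℝ)))) =
      Complex.exp (2 * Real.pi * Complex.I * j * ((∑ i, h i * z i : ℤ) : ℂ) / (M : ℂ)) := by
  have hMR : (M : ℝ) ≠ 0 := by positivity
  have hsum : (∑ i, (h i : ℂ) * Complex.ofReal (Int.fract ((j : ℝ) * (z i : ℝ) / (M : ℝ))))
      = Complex.ofReal ((j : ℝ) * ((∑ i, h i * z i : ℤ) : ℝ) / (M : ℝ))
        - ((∑ i, h i * ⌊(j : ℝ) * (z i : ℝ) / (M : ℝ)⌋ : ℤ) : ℂ) := by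
    push_cast
    rw [Finset.mul_sum, Finset.sum_div, ← Finset.sum_sub_distrib]
    refine Finset.sum_congr rfl fun i _ => ?_
    rw [Int.fract]
    push_cast
    ring
  rw [hsum, mul_sub, Complex.exp_sub]
  rw [mul_comm (2 * (Real.pi:ℂ) * Complex.I) ((∑ i, h i * ⌊(j : ℝ) * (z i : ℝ) / (M : ℝ)⌋ : ℤ) : ℂ)]
  rw [Complex.exp_int_mul_two_pi_mul_I]
  rw [div_one]
  congr 1
  push_cast
  field_simp

lemma geom_lemma (M : ℕ) (hM : 0 < M) (a : ℤ) :
    ∑ j ∈ Finset.range M, Complex.exp (2 * Real.pi * Complex.I * j * (a : ℂ) / (M : ℂ))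
      = if (M : ℤ) ∣ a then (M : ℂ) else 0 := by
  have hMC : (M : ℂ) ≠ 0 := by exact_mod_cast (Nat.cast_ne_zero (R := ℂ)).mpr hM.ne'
  set w : ℂ := Complex.exp (2 * Real.pi * Complex.I * (a : ℂ) / (M : ℂ)) with hw
  have hterm : ∀ j : ℕ, Complex.exp (2 * Real.pi * Complex.I * (j : ℂ) * (a : ℂ) / (M : ℂ)) = w ^ j := by
    intro j
    rw [hw, ← Complex.exp_nat_mul]
    congr 1
    field_simp
  rw [Finset.sum_congr rfl fun j _ => hterm j]
  have hw1 : w = 1 ↔ (M : ℤ) ∣ a := by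
    rw [hw, Complex.exp_eq_one_iff]
    constructor
    · rintro ⟨n, hn⟩
      refine ⟨n, ?_⟩
      have h2 : (2 * (Real.pi : ℂ) * Complex.I) ≠ 0 := by
        simp [Real.pi_ne_zero, Complex.I_ne_zero]
      have h3 : 2 * (Real.pi:ℂ) * Complex.I * (a:ℂ) = 2 * (Real.pi:ℂ) * Complex.I * ((n:ℂ) * M) := by
        field_simp at hn
        linear_combination (2 * (Real.pi:ℂ) * Complex.I) * hn
      have h4 : (a : ℂ) = (n : ℂ) * M := mul_left_cancel₀ h2 h3
      have h5 : a = n * M := by exact_mod_cast h4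
      exact h5.trans (mul_comm n M)
    · rintro ⟨n, rfl⟩
      refine ⟨n, ?_⟩
      push_cast
      field_simp
  by_cases hdvd : (M : ℤ) ∣ a
  · simp [hdvd, hw1.mpr hdvd]
  · rw [if_neg hdvd]
    have hwne : w ≠ 1 := fun h => hdvd (hw1.mp h)
    rw [geom_sum_eq hwne]
    have hwM : w ^ M = 1 := by
      rw [hw, ← Complex.exp_nat_mul]
      have : (M : ℂ) * (2 * Real.pi * Complex.I * (a : ℂ) / (M : ℂ)) = (a : ℂ) * (2 * Real.pi * Complex.I) := by
        field_simp
      rw [this]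
      exact_mod_cast Complex.exp_int_mul_two_pi_mul_I a
    rw [hwM]
    simp

lemma key_sum (d M : ℕ) (hM : 0 < M) (z : Fin d → ℤ) (I : Finset (Fin d → ℤ))
    (c : (Fin d → ℤ) → ℂ) (k : Fin d → ℤ) :
    (M : ℂ)⁻¹ * ∑ j ∈ Finset.range M,
        (∑ h ∈ I, c h * Complex.exp (2 * Real.pi * Complex.I *
            ∑ i, (h i : ℂ) * Complex.ofReal (Int.fract ((j : ℝ) * (z i : ℝ) / (M : ℝ))))) *
          Complex.exp (-(2 * Real.pi * Complex.I *
            ∑ i, (k i : ℂ) * Complex.ofReal (Int.fract ((j : ℝ) * (z i : ℝ) / (M : ℝ))))) =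
      ∑ h ∈ I, c h * (if (M : ℤ) ∣ ((∑ i, h i * z i) - (∑ i, k i * z i)) then 1 else 0) := by
  have hMC : (M : ℂ) ≠ 0 := by exact_mod_cast (Nat.cast_ne_zero (R := ℂ)).mpr hM.ne'
  have step1 : ∀ j ∈ Finset.range M,
      (∑ h ∈ I, c h * Complex.exp (2 * Real.pi * Complex.I *
          ∑ i, (h i : ℂ) * Complex.ofReal (Int.fract ((j : ℝ) * (z i : ℝ) / (M : ℝ))))) *
        Complex.exp (-(2 * Real.pi * Complex.I *
          ∑ i, (k i : ℂ) * Complex.ofReal (Int.fract ((j : ℝ) * (z i : ℝ) / (M : ℝ)))))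
      = ∑ h ∈ I, c h * Complex.exp (2 * Real.pi * Complex.I * j *
          (((∑ i, h i * z i) - (∑ i, k i * z i) : ℤ) : ℂ) / (M : ℂ)) := by
    intro j _
    rw [Finset.sum_mul]
    refine Finset.sum_congr rfl fun h _ => ?_
    rw [mul_assoc]
    congr 1
    rw [Complex.exp_neg, exp_fract_eq d M hM z h j, exp_fract_eq d M hM z k j,
      ← Complex.exp_neg, ← Complex.exp_add]
    congr 1
    push_cast
    ring
  rw [Finset.sum_congr rfl step1, Finset.sum_comm]
  rw [Finset.mul_sum]
  refine Finset.sum_congr rfl fun h _ => ?_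
  rw [← Finset.mul_sum, geom_lemma M hM ((∑ i, h i * z i) - (∑ i, k i * z i))]
  by_cases hd : (M : ℤ) ∣ ((∑ i, h i * z i) - (∑ i, k i * z i))
  · rw [if_pos hd, if_pos hd]
    field_simp
  · simp [hd]

lemma mod_iff_dvd (M : ℕ) (a b : ℤ) :
    a % (M : ℤ) = b % (M : ℤ) ↔ (M : ℤ) ∣ (a - b) := by
  constructor
  · intro hab
    exact Int.ModEq.dvd (Int.ModEq.symm hab)
  · intro hd
    exact Int.ModEq.symm (Int.modEq_iff_dvd.mpr hd)

lemma sum_sub_mul (d : ℕ) (z h k : Fin d → ℤ) :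
    (∑ i, (h i - k i) * z i) = (∑ i, h i * z i) - (∑ i, k i * z i) := by
  rw [← Finset.sum_sub_distrib]
  exact Finset.sum_congr rfl fun i _ => by ring

/-- `Λ(z,M)` is a reconstructing rank-1 lattice for `I` (all Fourier coefficients
of all `p ∈ Π_I` are obtained exactly) iff the residues `h·z mod M`, `h ∈ I`, are
pairwise distinct, equivalently `(h−k)·z ≢ 0 (mod M)` for all distinct `h,k ∈ I`. -/
theorem reconstruction_iff (d M : ℕ) (hM : 0 < M) (z : Fin d → ℤ)
    (I : Finset (Fin d → ℤ)) :
    ((∀ c : (Fin d → ℤ) → ℂ, ∀ k ∈ I,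
        (M : ℂ)⁻¹ * ∑ j ∈ Finset.range M,
            (∑ h ∈ I, c h * Complex.exp (2 * Real.pi * Complex.I *
                ∑ i, (h i : ℂ) * Complex.ofReal (Int.fract ((j : ℝ) * (z i : ℝ) / (M : ℝ))))) *
              Complex.exp (-(2 * Real.pi * Complex.I *
                ∑ i, (k i : ℂ) * Complex.ofReal (Int.fract ((j : ℝ) * (z i : ℝ) / (M : ℝ))))) =
          c k) ↔
      (∀ h ∈ I, ∀ k ∈ I,
          (∑ i, h i * z i) % (M : ℤ) = (∑ i, k i * z i) % (M : ℤ) → h = k)) ∧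
    ((∀ h ∈ I, ∀ k ∈ I,
        (∑ i, h i * z i) % (M : ℤ) = (∑ i, k i * z i) % (M : ℤ) → h = k) ↔
      (∀ h ∈ I, ∀ k ∈ I, h ≠ k → ¬ ((M : ℤ) ∣ ∑ i, (h i - k i) * z i))) := by
  constructor
  · constructor
    · intro H h hh k hk hmod
      have key := H (fun x => if x = h then 1 else 0) k hk
      rw [key_sum d M hM z I _ k] at key
      have hsum : (∑ h' ∈ I, (if h' = h then (1:ℂ) else 0) *
          (if (M:ℤ) ∣ ((∑ i, h' i * z i) - (∑ i, k i * z i)) then 1 else 0))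
          = if (M:ℤ) ∣ ((∑ i, h i * z i) - (∑ i, k i * z i)) then 1 else 0 := by
        rw [Finset.sum_eq_single h]
        · simp
        · intro b _ hb; simp [hb]
        · intro hnot; exact absurd hh hnot
      rw [hsum, if_pos ((mod_iff_dvd M _ _).mp hmod)] at key
      have key2 : (1:ℂ) = if k = h then 1 else 0 := key
      by_contra hne
      rw [if_neg (fun e => hne e.symm)] at key2
      exact one_ne_zero key2
    · intro H c k hk
      rw [key_sum d M hM z I c k]
      rw [Finset.sum_eq_single k]
      · simp
      · intro b hb hbk
        rw [if_neg, mul_zero]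
        intro hd
        exact hbk (H b hb k hk ((mod_iff_dvd M _ _).mpr hd))
      · intro h; exact absurd hk h
  · constructor
    · intro H h hh k hk hne hdvd
      rw [sum_sub_mul d z h k] at hdvd
      exact hne (H h hh k hk ((mod_iff_dvd M _ _).mpr hdvd))
    · intro H h hh k hk hmod
      by_contra hne
      exact H h hh k hk hne (by rw [sum_sub_mul d z h k]; exact (mod_iff_dvd M _ _).mp hmod)
end

section
/- Let p₁ > 2 be a prime. Then the smallest prime p₂ strictly greater than p₁/2 satisfies p₂ ≤ 5p₁/7. -/
open Finset Real ArithmeticFunction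

noncomputable def psiC (n : ℕ) : ℝ := ∑ d ∈ Finset.Ioc 0 n, Λ d

lemma log_factorial (n : ℕ) :
    Real.log (n.factorial : ℝ) = ∑ d ∈ Finset.Ioc 0 n, Λ d * ((n / d : ℕ) : ℝ) := by
  have h1 : Real.log (n.factorial : ℝ) = ∑ k ∈ Finset.Ioc 0 n, Real.log k := by
    induction n with
    | zero => simp
    | succ m ih =>
      rw [Finset.sum_Ioc_succ_top (Nat.zero_le _), ← ih, Nat.factorial_succ,
        Nat.cast_mul, Real.log_mul (by positivity) (by positivity)]
      ring
  have h2 : ∀ k ∈ Finset.Ioc 0 n, Real.log k = ∑ d ∈ Finset.Ioc 0 n,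
      if d ∣ k then Λ d else 0 := by
    intro k hk
    simp only [Finset.mem_Ioc] at hk
    rw [← ArithmeticFunction.vonMangoldt_sum (n := k), ← Finset.sum_filter]
    congr 1
    ext d
    simp only [Nat.mem_divisors, Finset.mem_filter, Finset.mem_Ioc]
    constructor
    · rintro ⟨hd, _⟩
      exact ⟨⟨Nat.pos_of_dvd_of_pos hd hk.1, (Nat.le_of_dvd hk.1 hd).trans hk.2⟩, hd⟩
    · rintro ⟨_, hd⟩
      exact ⟨hd, by omega⟩
  rw [h1, Finset.sum_congr rfl h2, Finset.sum_comm]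
  refine Finset.sum_congr rfl fun d _ => ?_
  rw [← Finset.sum_filter, Finset.sum_const, ← Nat.Ioc_filter_dvd_card_eq_div]
  simp [mul_comm]

noncomputable def DD (n : ℕ) : ℝ :=
  Real.log (n.factorial : ℝ) + Real.log (((n/30).factorial : ℕ) : ℝ)
    - Real.log (((n/2).factorial : ℕ) : ℝ) - Real.log (((n/3).factorial : ℕ) : ℝ)
    - Real.log (((n/5).factorial : ℕ) : ℝ)

noncomputable def gR (m : ℕ) : ℝ :=
  (m : ℝ) + ((m/30 : ℕ) : ℝ) - ((m/2 : ℕ) : ℝ) - ((m/3 : ℕ) : ℝ) - ((m/5 : ℕ) : ℝ)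

lemma gR_nonneg (m : ℕ) : 0 ≤ gR m := by
  have h : m/2 + m/3 + m/5 ≤ m + m/30 := by omega
  unfold gR
  have := (Nat.cast_le (α := ℝ)).2 h
  push_cast at this ⊢
  linarith

lemma gR_le_one (m : ℕ) : gR m ≤ 1 := by
  have h : m + m/30 ≤ m/2 + m/3 + m/5 + 1 := by omega
  unfold gR
  have := (Nat.cast_le (α := ℝ)).2 h
  push_cast at this ⊢
  linarith

lemma gR_eq_one {m : ℕ} (h1 : 1 ≤ m) (h5 : m ≤ 5) : gR m = 1 := by
  interval_cases m <;> norm_num [gR]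

lemma log_factorial_div (n k : ℕ) (hk : 0 < k) :
    Real.log (((n/k).factorial : ℕ) : ℝ) = ∑ d ∈ Finset.Ioc 0 n, Λ d * ((n / d / k : ℕ) : ℝ) := by
  rw [log_factorial]
  have he : ∀ d : ℕ, ((n/k/d : ℕ) : ℝ) = ((n/d/k : ℕ) : ℝ) := by
    intro d
    rw [Nat.div_div_eq_div_mul, Nat.div_div_eq_div_mul, Nat.mul_comm]
  simp_rw [he]
  refine Finset.sum_subset (Finset.Ioc_subset_Ioc le_rfl (Nat.div_le_self n k)) ?_
  intro d hd hd'
  simp only [Finset.mem_Ioc] at hd hd'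
  have h0 : n / d / k = 0 := by
    have hlt : n < d * k := (Nat.div_lt_iff_lt_mul hk).1 (by omega)
    rw [Nat.div_div_eq_div_mul]
    exact Nat.div_eq_of_lt hlt
  rw [h0]
  simp

lemma DD_eq (n : ℕ) : DD n = ∑ d ∈ Finset.Ioc 0 n, Λ d * gR (n / d) := by
  unfold DD
  rw [log_factorial, log_factorial_div n 30 (by norm_num), log_factorial_div n 2 (by norm_num),
    log_factorial_div n 3 (by norm_num), log_factorial_div n 5 (by norm_num),
    ← Finset.sum_add_distrib, ← Finset.sum_sub_distrib, ← Finset.sum_sub_distrib,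
    ← Finset.sum_sub_distrib]
  refine Finset.sum_congr rfl fun d _ => ?_
  unfold gR
  ring

lemma DD_le_psi (n : ℕ) : DD n ≤ psiC n := by
  rw [DD_eq, psiC]
  refine Finset.sum_le_sum fun d _ => ?_
  calc Λ d * gR (n / d) ≤ Λ d * 1 :=
        mul_le_mul_of_nonneg_left (gR_le_one _) vonMangoldt_nonneg
    _ = Λ d := mul_one _

lemma psi_le_DD_add (n : ℕ) : psiC n ≤ DD n + psiC (n / 6) := by
  have hsplit : psiC (n/6) + ∑ d ∈ Finset.Ioc (n/6) n, Λ d = psiC n := by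
    rw [psiC, psiC]
    exact Finset.sum_Ioc_consecutive _ (Nat.zero_le _) (Nat.div_le_self n 6)
  have hD : DD n ≥ ∑ d ∈ Finset.Ioc (n/6) n, Λ d := by
    rw [DD_eq,
      ← Finset.sum_Ioc_consecutive (fun d => Λ d * gR (n/d)) (Nat.zero_le (n/6)) (Nat.div_le_self n 6)]
    have h1 : (0:ℝ) ≤ ∑ d ∈ Finset.Ioc 0 (n/6), Λ d * gR (n/d) :=
      Finset.sum_nonneg fun d _ => mul_nonneg vonMangoldt_nonneg (gR_nonneg _)
    have h2 : ∑ d ∈ Finset.Ioc (n/6) n, Λ d * gR (n/d) = ∑ d ∈ Finset.Ioc (n/6) n, Λ d := by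
      refine Finset.sum_congr rfl fun d hd => ?_
      simp only [Finset.mem_Ioc] at hd
      have hd6 : n / d ≤ 5 := by
        have h6 : n < 6 * d := by omega
        have := (Nat.div_lt_iff_lt_mul (show 0 < d by omega)).2 h6
        omega
      have hd1 : 1 ≤ n / d := Nat.one_le_div_iff (by omega) |>.2 hd.2
      rw [gR_eq_one hd1 hd6, mul_one]
    linarith
  linarith

lemma h_gap {b a x : ℝ} (hb : 1 ≤ b) (hba : b ≤ a) (hab : a ≤ b + 1) (hax : a ≤ x) :
    a * Real.log a - a - (b * Real.log b - b) ≤ Real.log x ∧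
      b * Real.log b - b ≤ a * Real.log a - a := by
  have hb0 : (0:ℝ) < b := by linarith
  have ha0 : (0:ℝ) < a := by linarith
  have hlogle : Real.log a - Real.log b ≤ a / b - 1 := by
    have := Real.log_le_sub_one_of_pos (show (0:ℝ) < a / b by positivity)
    rwa [Real.log_div ha0.ne' hb0.ne'] at this
  have hlogge : 1 - b / a ≤ Real.log a - Real.log b := by
    have := Real.log_le_sub_one_of_pos (show (0:ℝ) < b / a by positivity)
    rw [Real.log_div hb0.ne' ha0.ne'] at this
    linarith
  have h1 : b * (Real.log a - Real.log b) ≤ a - b := by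
    have h := mul_le_mul_of_nonneg_left hlogle hb0.le
    have he : b * (a / b - 1) = a - b := by field_simp
    rw [he] at h
    linarith [h]
  have h2 : a - b ≤ a * (Real.log a - Real.log b) := by
    have h := mul_le_mul_of_nonneg_left hlogge ha0.le
    have he : a * (1 - b / a) = a - b := by field_simp
    rw [he] at h
    linarith [h]
  constructor
  · -- h(a) - h(b) ≤ (a-b) * log a ≤ log a ≤ log x
    have key : a * Real.log a - a - (b * Real.log b - b) ≤ (a - b) * Real.log a := by
      nlinarith [h1]
    have hla : (0:ℝ) ≤ Real.log a := Real.log_nonneg (by linarith)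
    have : (a - b) * Real.log a ≤ 1 * Real.log a :=
      mul_le_mul_of_nonneg_right (by linarith) hla
    have hlx : Real.log a ≤ Real.log x := Real.log_le_log ha0 hax
    linarith
  · -- (a-b) * log b ≥ 0 and h(a) - h(b) ≥ (a-b) log b
    have key : (a - b) * Real.log b ≤ a * Real.log a - a - (b * Real.log b - b) := by
      nlinarith [h2]
    have : (0:ℝ) ≤ (a - b) * Real.log b :=
      mul_nonneg (by linarith) (Real.log_nonneg hb)
    linarith

lemma logfac_bounds : ∀ m : ℕ, 1 ≤ m →
    (m:ℝ) * Real.log m - m + 1 ≤ Real.log (m.factorial : ℝ) ∧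
      Real.log (m.factorial : ℝ) ≤ (m:ℝ) * Real.log m - m + 1 + Real.log m := by
  intro m hm
  induction m with
  | zero => omega
  | succ k ih =>
    rcases Nat.eq_or_lt_of_le hm with h1 | h1
    · simp [← h1]
    · have hk : 1 ≤ k := by omega
      obtain ⟨ihl, ihu⟩ := ih hk
      have hk0 : (0:ℝ) < k := by positivity
      have hk10 : (0:ℝ) < (k:ℝ) + 1 := by positivity
      have hstep : Real.log ((k+1).factorial : ℝ) = Real.log (k.factorial : ℝ) + Real.log ((k:ℝ)+1) := by
        rw [Nat.factorial_succ, Nat.cast_mul, Real.log_mul (by positivity) (by positivity)]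
        push_cast
        ring
      -- (k+1) * (log(k+1) - log k) ≥ 1
      have f1 : 1 ≤ ((k:ℝ)+1) * (Real.log ((k:ℝ)+1) - Real.log k) := by
        have := Real.log_le_sub_one_of_pos (show (0:ℝ) < (k:ℝ)/((k:ℝ)+1) by positivity)
        rw [Real.log_div hk0.ne' hk10.ne'] at this
        have h2 : (k:ℝ)/((k:ℝ)+1) - 1 = -(1/((k:ℝ)+1)) := by field_simp; ring
        rw [h2] at this
        have h := mul_le_mul_of_nonneg_left this hk10.le
        have he : ((k:ℝ)+1) * (-(1/((k:ℝ)+1))) = -1 := by field_simp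
        rw [he] at h
        linarith [h]
      -- k * (log(k+1) - log k) ≤ 1
      have f2 : (k:ℝ) * (Real.log ((k:ℝ)+1) - Real.log k) ≤ 1 := by
        have := Real.log_le_sub_one_of_pos (show (0:ℝ) < ((k:ℝ)+1)/(k:ℝ) by positivity)
        rw [Real.log_div hk10.ne' hk0.ne'] at this
        have h2 : ((k:ℝ)+1)/(k:ℝ) - 1 = 1/(k:ℝ) := by field_simp; ring
        rw [h2] at this
        have h := mul_le_mul_of_nonneg_left this hk0.le
        have he : (k:ℝ) * (1/(k:ℝ)) = 1 := by field_simp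
        rw [he] at h
        linarith [h]
      constructor
      · push_cast
        rw [hstep]
        nlinarith [f2]
      · push_cast
        rw [hstep]
        nlinarith [f1]

noncomputable def AA : ℝ :=
  Real.log 2 / 2 + Real.log 3 / 3 + Real.log 5 / 5 - Real.log 30 / 30

lemma log30_eq : Real.log 30 = Real.log 2 + Real.log 3 + Real.log 5 := by
  rw [show (30:ℝ) = 2*3*5 by norm_num, Real.log_mul (by norm_num) (by norm_num),
    Real.log_mul (by norm_num) (by norm_num)]

lemma AA_bounds : 0.9212 ≤ AA ∧ AA ≤ 0.9215 := by
  have l2lo := Real.log_two_gt_d9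
  have l2hi := Real.log_two_lt_d9
  have h3lo : (84:ℝ) * Real.log 2 ≤ 53 * Real.log 3 := by
    have h := Real.log_le_log (by positivity) (show (2:ℝ)^84 ≤ 3^53 by norm_num)
    rwa [Real.log_pow, Real.log_pow, Nat.cast_ofNat, Nat.cast_ofNat] at h
  have h3hi : (41:ℝ) * Real.log 3 ≤ 65 * Real.log 2 := by
    have h := Real.log_le_log (by positivity) (show (3:ℝ)^41 ≤ 2^65 by norm_num)
    rwa [Real.log_pow, Real.log_pow, Nat.cast_ofNat, Nat.cast_ofNat] at h
  have h5lo : (65:ℝ) * Real.log 2 ≤ 28 * Real.log 5 := by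
    have h := Real.log_le_log (by positivity) (show (2:ℝ)^65 ≤ 5^28 by norm_num)
    rwa [Real.log_pow, Real.log_pow, Nat.cast_ofNat, Nat.cast_ofNat] at h
  have h5hi : (31:ℝ) * Real.log 5 ≤ 72 * Real.log 2 := by
    have h := Real.log_le_log (by positivity) (show (5:ℝ)^31 ≤ 2^72 by norm_num)
    rwa [Real.log_pow, Real.log_pow, Nat.cast_ofNat, Nat.cast_ofNat] at h
  unfold AA
  rw [log30_eq]
  constructor <;> nlinarith [l2lo, l2hi, h3lo, h3hi, h5lo, h5hi]

set_option maxHeartbeats 1000000 in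
lemma DD_bounds {n : ℕ} (hn : 30 ≤ n) :
    0.9212 * (n:ℝ) - (5 * Real.log n + 1) ≤ DD n ∧
      DD n ≤ 0.9215 * (n:ℝ) + 5 * Real.log n := by
  have hx : (30:ℝ) ≤ (n:ℝ) := by exact_mod_cast hn
  have hx0 : (0:ℝ) < (n:ℝ) := by linarith
  have hx1 : (1:ℝ) ≤ (n:ℝ) := by linarith
  -- the four floor quantities
  have key : ∀ k : ℕ, 2 ≤ k → k ≤ 30 → 1 ≤ n / k →
      ((n/k : ℕ) : ℝ) ≤ (n:ℝ)/k ∧ (n:ℝ)/k ≤ ((n/k : ℕ) : ℝ) + 1 ∧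
        (1:ℝ) ≤ ((n/k : ℕ) : ℝ) ∧ (n:ℝ)/k ≤ (n:ℝ) := by
    intro k hk2 hk30 hk1
    have hk0 : (0:ℝ) < (k:ℝ) := by positivity
    refine ⟨Nat.cast_div_le, ?_, by exact_mod_cast hk1, ?_⟩
    · have hnat : n < n / k * k + k := Nat.lt_div_mul_add (by omega)
      have hc : (n:ℝ) < ((n/k : ℕ) : ℝ) * k + k := by exact_mod_cast hnat
      rw [div_le_iff₀ hk0]
      nlinarith
    · rw [div_le_iff₀ hk0]
      have hk1' : (1:ℝ) ≤ (k:ℝ) := by exact_mod_cast (by omega : 1 ≤ k)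
      nlinarith
  obtain ⟨b2a, a2b, b2one, a2x⟩ := key 2 (by norm_num) (by norm_num) (by omega)
  obtain ⟨b3a, a3b, b3one, a3x⟩ := key 3 (by norm_num) (by norm_num) (by omega)
  obtain ⟨b5a, a5b, b5one, a5x⟩ := key 5 (by norm_num) (by norm_num) (by omega)
  obtain ⟨b30a, a30b, b30one, a30x⟩ := key 30 (by norm_num) (by norm_num) (by omega)
  obtain ⟨g2u, g2l⟩ := h_gap b2one b2a a2b a2x
  obtain ⟨g3u, g3l⟩ := h_gap b3one b3a a3b a3x
  obtain ⟨g5u, g5l⟩ := h_gap b5one b5a a5b a5x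
  obtain ⟨g30u, g30l⟩ := h_gap b30one b30a a30b a30x
  obtain ⟨fnl, fnu⟩ := logfac_bounds n (by omega)
  obtain ⟨f2l, f2u⟩ := logfac_bounds (n/2) (by omega)
  obtain ⟨f3l, f3u⟩ := logfac_bounds (n/3) (by omega)
  obtain ⟨f5l, f5u⟩ := logfac_bounds (n/5) (by omega)
  obtain ⟨f30l, f30u⟩ := logfac_bounds (n/30) (by omega)
  have lb2 : Real.log ((n/2 : ℕ) : ℝ) ≤ Real.log n := Real.log_le_log (by linarith) (by linarith)
  have lb3 : Real.log ((n/3 : ℕ) : ℝ) ≤ Real.log n := Real.log_le_log (by linarith) (by linarith)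
  have lb5 : Real.log ((n/5 : ℕ) : ℝ) ≤ Real.log n := Real.log_le_log (by linarith) (by linarith)
  have lb30 : Real.log ((n/30 : ℕ) : ℝ) ≤ Real.log n := Real.log_le_log (by linarith) (by linarith)
  have hlogn : (0:ℝ) ≤ Real.log n := Real.log_nonneg hx1
  have hA : (n:ℝ) * Real.log n - n + (((n:ℝ)/30) * Real.log ((n:ℝ)/30) - (n:ℝ)/30)
      - (((n:ℝ)/2) * Real.log ((n:ℝ)/2) - (n:ℝ)/2)
      - (((n:ℝ)/3) * Real.log ((n:ℝ)/3) - (n:ℝ)/3)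
      - (((n:ℝ)/5) * Real.log ((n:ℝ)/5) - (n:ℝ)/5) = AA * n := by
    rw [Real.log_div hx0.ne' (by norm_num), Real.log_div hx0.ne' (by norm_num),
      Real.log_div hx0.ne' (by norm_num), Real.log_div hx0.ne' (by norm_num), log30_eq]
    unfold AA
    rw [log30_eq]
    ring
  have hAx : 0.9212 * (n:ℝ) ≤ AA * n ∧ AA * n ≤ 0.9215 * (n:ℝ) := by
    obtain ⟨h1, h2⟩ := AA_bounds
    constructor <;> nlinarith
  unfold DD
  constructor <;> linarith [hAx.1, hAx.2]

lemma log_le_tangent {x a : ℝ} (hx : 0 < x) (ha : 0 < a) :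
    Real.log x ≤ Real.log a + x / a - 1 := by
  have := Real.log_le_sub_one_of_pos (show (0:ℝ) < x / a by positivity)
  rw [Real.log_div hx.ne' ha.ne'] at this
  linarith

lemma psiC_nonneg (n : ℕ) : 0 ≤ psiC n :=
  Finset.sum_nonneg fun d _ => vonMangoldt_nonneg

lemma psiC_mono {m n : ℕ} (h : m ≤ n) : psiC m ≤ psiC n :=
  Finset.sum_le_sum_of_subset_of_nonneg (Finset.Ioc_subset_Ioc le_rfl h)
    (fun d _ _ => vonMangoldt_nonneg)

lemma psiC_le_nlogn (n : ℕ) : psiC n ≤ (n:ℝ) * Real.log n := by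
  calc psiC n ≤ ∑ _d ∈ Finset.Ioc 0 n, Real.log n := by
        refine Finset.sum_le_sum fun d hd => ?_
        simp only [Finset.mem_Ioc] at hd
        exact le_trans vonMangoldt_le_log
          (Real.log_le_log (by exact_mod_cast hd.1) (by exact_mod_cast hd.2))
    _ = (n:ℝ) * Real.log n := by
        rw [Finset.sum_const, Nat.card_Ioc]
        simp

lemma psi_stage1 : ∀ n : ℕ, psiC n ≤ 2 * (n:ℝ) + 107 := by
  intro n
  induction n using Nat.strong_induction_on with
  | _ n ih =>
    rcases le_or_gt n 31 with hn | hn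
    · have h1 : psiC n ≤ psiC 31 := psiC_mono hn
      have h2 : psiC 31 ≤ 31 * Real.log 31 := psiC_le_nlogn 31
      have h3 : Real.log 31 ≤ Real.log 32 + 31/32 - 1 :=
        log_le_tangent (by norm_num) (by norm_num)
      have h4 : Real.log 32 = 5 * Real.log 2 := by
        rw [show (32:ℝ) = 2^5 by norm_num, Real.log_pow]
        norm_num
      have := Real.log_two_lt_d9
      have hn0 : (0:ℝ) ≤ (n:ℝ) := by positivity
      nlinarith
    · have h6 : n / 6 < n := Nat.div_lt_self (by omega) (by norm_num)
      have ih6 := ih (n/6) h6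
      have hDD := (DD_bounds (show 30 ≤ n by omega)).2
      have hstep := psi_le_DD_add n
      have hcast : ((n/6 : ℕ) : ℝ) ≤ (n:ℝ) / 6 := Nat.cast_div_le
      have hx : (32:ℝ) ≤ (n:ℝ) := by exact_mod_cast hn
      have hlog : Real.log n ≤ Real.log 32 + (n:ℝ)/32 - 1 :=
        log_le_tangent (by linarith) (by norm_num)
      have h4 : Real.log 32 = 5 * Real.log 2 := by
        rw [show (32:ℝ) = 2^5 by norm_num, Real.log_pow]
        norm_num
      have := Real.log_two_lt_d9
      linarith

lemma psi_upper : ∀ n : ℕ, psiC n ≤ 1.25 * (n:ℝ) + 287 := by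
  intro n
  induction n using Nat.strong_induction_on with
  | _ n ih =>
    rcases le_or_gt n 239 with hn | hn
    · have h1 := psi_stage1 n
      have hx : (n:ℝ) ≤ 239 := by exact_mod_cast hn
      linarith
    · have h6 : n / 6 < n := Nat.div_lt_self (by omega) (by norm_num)
      have ih6 := ih (n/6) h6
      have hDD := (DD_bounds (show 30 ≤ n by omega)).2
      have hstep := psi_le_DD_add n
      have hcast : ((n/6 : ℕ) : ℝ) ≤ (n:ℝ) / 6 := Nat.cast_div_le
      have hx : (240:ℝ) ≤ (n:ℝ) := by exact_mod_cast hn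
      have hlog : Real.log n ≤ Real.log 256 + (n:ℝ)/256 - 1 :=
        log_le_tangent (by linarith) (by norm_num)
      have h4 : Real.log 256 = 8 * Real.log 2 := by
        rw [show (256:ℝ) = 2^8 by norm_num, Real.log_pow]
        norm_num
      have := Real.log_two_lt_d9
      linarith

noncomputable def thC (n : ℕ) : ℝ :=
  ∑ p ∈ (Finset.Ioc 0 n).filter Nat.Prime, Real.log p

def cbrtN (n : ℕ) : ℕ := Nat.findGreatest (fun k => k^3 ≤ n) n

lemma thC_nonneg (n : ℕ) : 0 ≤ thC n := by
  refine Finset.sum_nonneg fun p hp => ?_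
  simp only [Finset.mem_filter, Finset.mem_Ioc] at hp
  exact Real.log_nonneg (by exact_mod_cast hp.1.1)

lemma thC_le (n : ℕ) : thC n ≤ 2 * Real.log 2 * n := by
  have hset : (Finset.Ioc 0 n).filter Nat.Prime
      = (Finset.range (n+1)).filter Nat.Prime := by
    ext p
    simp only [Finset.mem_filter, Finset.mem_Ioc, Finset.mem_range]
    constructor
    · rintro ⟨⟨h1, h2⟩, hp⟩; exact ⟨by omega, hp⟩
    · rintro ⟨h1, hp⟩; exact ⟨⟨hp.pos, by omega⟩, hp⟩
  have h1 : thC n = Real.log (primorial n : ℝ) := by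
    rw [thC, hset, primorial]
    rw [Nat.cast_prod, Real.log_prod]
    intro p hp
    simp only [Finset.mem_filter] at hp
    exact_mod_cast hp.2.pos.ne'
  rw [h1]
  calc Real.log (primorial n : ℝ) ≤ Real.log ((4:ℝ)^n) := by
        apply Real.log_le_log (by exact_mod_cast primorial_pos n)
        exact_mod_cast primorial_le_4_pow n
    _ = n * Real.log 4 := by rw [Real.log_pow]
    _ = 2 * Real.log 2 * n := by
        rw [show (4:ℝ) = 2^2 by norm_num, Real.log_pow]
        push_cast
        ring

lemma psi_theta_gap (n : ℕ) (hn : 1 ≤ n) :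
    psiC n ≤ thC n + thC (Nat.sqrt n) + (cbrtN n : ℝ) * Real.log n := by
  classical
  have hsplit : psiC n = (∑ d ∈ (Finset.Ioc 0 n).filter Nat.Prime, Λ d)
      + ∑ d ∈ (Finset.Ioc 0 n).filter (fun d => ¬ d.Prime), Λ d :=
    (Finset.sum_filter_add_sum_filter_not _ _ _).symm
  have hprime : (∑ d ∈ (Finset.Ioc 0 n).filter Nat.Prime, Λ d) = thC n := by
    refine Finset.sum_congr rfl fun p hp => ?_
    simp only [Finset.mem_filter] at hp
    exact vonMangoldt_apply_prime hp.2
  -- the non-prime part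
  set S' : Finset ℕ := (Finset.Ioc 0 n).filter (fun d => IsPrimePow d ∧ ¬ d.Prime) with hS'
  have hrest : ∑ d ∈ (Finset.Ioc 0 n).filter (fun d => ¬ d.Prime), Λ d = ∑ d ∈ S', Λ d := by
    rw [hS']
    refine (Finset.sum_subset ?_ ?_).symm
    · intro d hd
      simp only [Finset.mem_filter] at hd ⊢
      exact ⟨hd.1, hd.2.2⟩
    · intro d hd hd'
      simp only [Finset.mem_filter] at hd hd'
      rw [vonMangoldt_apply, if_neg]
      tauto
  -- fiberwise over minFac
  set c2 := Nat.sqrt n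
  set P2 : Finset ℕ := (Finset.Ioc 0 c2).filter Nat.Prime with hP2
  have hmaps : ∀ d ∈ S', d.minFac ∈ P2 := by
    intro d hd
    simp only [hS', Finset.mem_filter, Finset.mem_Ioc] at hd
    obtain ⟨⟨hd0, hdn⟩, hpp, hnp⟩ := hd
    obtain ⟨p, k, hp, hk, rfl⟩ := (isPrimePow_nat_iff _).1 hpp
    have hk2 : 2 ≤ k := by
      by_contra h
      push_neg at h
      have hk1 : k = 1 := by omega
      subst hk1
      rw [pow_one] at hnp
      exact hnp hp
    have hmf : (p^k).minFac = p := Nat.Prime.pow_minFac hp (by omega)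
    rw [hmf]
    simp only [hP2, Finset.mem_filter, Finset.mem_Ioc]
    refine ⟨⟨hp.pos, ?_⟩, hp⟩
    rw [Nat.le_sqrt]
    calc p * p = p^2 := by ring
      _ ≤ p^k := Nat.pow_le_pow_right hp.pos hk2
      _ ≤ n := hdn
  have hfib : ∑ d ∈ S', Λ d = ∑ p ∈ P2, ∑ d ∈ S'.filter (fun d => d.minFac = p), Λ d :=
    (Finset.sum_fiberwise_of_maps_to hmaps _).symm
  -- bound each fiber
  have hfibb : ∀ p ∈ P2, (∑ d ∈ S'.filter (fun d => d.minFac = p), Λ d)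
      ≤ Real.log p + (if p^3 ≤ n then Real.log n else 0) := by
    intro p hp
    simp only [hP2, Finset.mem_filter, Finset.mem_Ioc] at hp
    obtain ⟨⟨hp0, hpc⟩, hpp⟩ := hp
    have hlam : ∀ d ∈ S'.filter (fun d => d.minFac = p), Λ d = Real.log p := by
      intro d hd
      simp only [Finset.mem_filter, hS', Finset.mem_Ioc] at hd
      rw [vonMangoldt_apply, if_pos hd.1.2.1, hd.2]
    rw [Finset.sum_congr rfl hlam, Finset.sum_const, nsmul_eq_mul]
    have hcard : (S'.filter (fun d => d.minFac = p)).card ≤ Nat.log p n - 1 := by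
      have hsub : S'.filter (fun d => d.minFac = p)
          ⊆ (Finset.Icc 2 (Nat.log p n)).image (p ^ ·) := by
        intro d hd
        simp only [Finset.mem_filter, hS', Finset.mem_Ioc] at hd
        obtain ⟨⟨⟨hd0, hdn⟩, hpp', hnp⟩, hmf⟩ := hd
        obtain ⟨q, k, hq, hk, rfl⟩ := (isPrimePow_nat_iff _).1 hpp'
        have hqp : q = p := by rw [← hmf, Nat.Prime.pow_minFac hq (by omega)]
        subst hqp
        have hk2 : 2 ≤ k := by
          by_contra h
          push_neg at h
          have hk1 : k = 1 := by omega
          subst hk1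
          rw [pow_one] at hnp
          exact hnp hq
        simp only [Finset.mem_image, Finset.mem_Icc]
        exact ⟨k, ⟨hk2, (Nat.le_log_iff_pow_le hq.one_lt (by omega)).2 hdn⟩, rfl⟩
      calc (S'.filter (fun d => d.minFac = p)).card
          ≤ ((Finset.Icc 2 (Nat.log p n)).image (p ^ ·)).card := Finset.card_le_card hsub
        _ ≤ (Finset.Icc 2 (Nat.log p n)).card := Finset.card_image_le
        _ = Nat.log p n - 1 := by rw [Nat.card_Icc]; omega
    have hlp : (0:ℝ) ≤ Real.log p := Real.log_nonneg (by exact_mod_cast hpp.one_lt.le)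
    by_cases h3 : p^3 ≤ n
    · -- card * log p ≤ (log_p n) * log p = log (p ^ log_p n) ≤ log n
      have hK : 1 ≤ Nat.log p n := by
        have hpn : p ≤ n := le_trans (Nat.le_self_pow (by norm_num) p) h3
        exact (Nat.le_log_iff_pow_le hpp.one_lt (show n ≠ 0 by omega)).2 (by simpa using hpn)
      have hKn : (p:ℝ) ^ (Nat.log p n) ≤ (n:ℝ) := by
        exact_mod_cast Nat.pow_log_le_self p (show n ≠ 0 by omega)
      have hlogKn : (Nat.log p n : ℝ) * Real.log p ≤ Real.log n := by
        have := Real.log_le_log (by positivity) hKn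
        rwa [Real.log_pow] at this
      have hcard' : ((S'.filter (fun d => d.minFac = p)).card : ℝ) ≤ (Nat.log p n : ℝ) := by
        have : (S'.filter (fun d => d.minFac = p)).card ≤ Nat.log p n := by omega
        exact_mod_cast this
      rw [if_pos h3]
      calc ((S'.filter (fun d => d.minFac = p)).card : ℝ) * Real.log p
          ≤ (Nat.log p n : ℝ) * Real.log p := mul_le_mul_of_nonneg_right hcard' hlp
        _ ≤ Real.log n := hlogKn
        _ ≤ Real.log p + Real.log n := by linarith
    · -- p^3 > n: fiber has at most one element (p^2)
      have hK2 : Nat.log p n ≤ 2 := by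
        by_contra h
        push_neg at h
        have : p ^ 3 ≤ p ^ Nat.log p n := Nat.pow_le_pow_right hpp.pos (by omega)
        have := le_trans this (Nat.pow_log_le_self p (show n ≠ 0 by omega))
        omega
      have : (S'.filter (fun d => d.minFac = p)).card ≤ 1 := by omega
      rw [if_neg h3]
      have hc : ((S'.filter (fun d => d.minFac = p)).card : ℝ) ≤ 1 := by exact_mod_cast this
      calc ((S'.filter (fun d => d.minFac = p)).card : ℝ) * Real.log p
          ≤ 1 * Real.log p := mul_le_mul_of_nonneg_right hc hlp
        _ = Real.log p + 0 := by ring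
  -- sum the fiber bounds
  have hsum2 : ∑ d ∈ S', Λ d ≤ thC c2 + (cbrtN n : ℝ) * Real.log n := by
    rw [hfib]
    calc ∑ p ∈ P2, ∑ d ∈ S'.filter (fun d => d.minFac = p), Λ d
        ≤ ∑ p ∈ P2, (Real.log p + (if p^3 ≤ n then Real.log n else 0)) :=
          Finset.sum_le_sum hfibb
      _ = (∑ p ∈ P2, Real.log p) + ∑ p ∈ P2, (if p^3 ≤ n then Real.log n else 0) :=
          Finset.sum_add_distrib
      _ ≤ thC c2 + (cbrtN n : ℝ) * Real.log n := by
          have h1 : (∑ p ∈ P2, Real.log p) = thC c2 := rfl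
          have h2 : ∑ p ∈ P2, (if p^3 ≤ n then Real.log n else 0)
              ≤ (cbrtN n : ℝ) * Real.log n := by
            rw [← Finset.sum_filter, Finset.sum_const, nsmul_eq_mul]
            have hsub : P2.filter (fun p => p^3 ≤ n) ⊆ Finset.Ioc 0 (cbrtN n) := by
              intro p hp
              simp only [Finset.mem_filter, hP2, Finset.mem_Ioc] at hp ⊢
              obtain ⟨⟨⟨hp0, _⟩, hpp⟩, h3⟩ := hp
              refine ⟨hp0, ?_⟩
              exact Nat.le_findGreatest (le_trans (Nat.le_self_pow (by norm_num) p) h3) h3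
            have hcard : (P2.filter (fun p => p^3 ≤ n)).card ≤ cbrtN n := by
              calc (P2.filter (fun p => p^3 ≤ n)).card
                  ≤ (Finset.Ioc 0 (cbrtN n)).card := Finset.card_le_card hsub
                _ = cbrtN n := by rw [Nat.card_Ioc]; omega
            have hln : (0:ℝ) ≤ Real.log n := Real.log_nonneg (by exact_mod_cast hn)
            have : ((P2.filter (fun p => p^3 ≤ n)).card : ℝ) ≤ (cbrtN n : ℝ) := by
              exact_mod_cast hcard
            exact mul_le_mul_of_nonneg_right this hln
          linarith
  rw [hsplit, hprime, hrest]
  linarith [thC_nonneg c2, hsum2]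

lemma thC_le_psiC (n : ℕ) : thC n ≤ psiC n := by
  rw [thC, psiC]
  have : ∀ p ∈ (Finset.Ioc 0 n).filter Nat.Prime, Real.log p = Λ p := by
    intro p hp
    simp only [Finset.mem_filter] at hp
    exact (vonMangoldt_apply_prime hp.2).symm
  rw [Finset.sum_congr rfl this]
  exact Finset.sum_le_sum_of_subset_of_nonneg (Finset.filter_subset _ _)
    fun _ _ _ => vonMangoldt_nonneg

set_option maxHeartbeats 1000000 in
theorem exists_prime_interval {n : ℕ} (hn : 100000 ≤ n) :
    ∃ p : ℕ, p.Prime ∧ n < 2 * p ∧ 7 * p ≤ 5 * n := by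
  set M := 5 * n / 7 with hMdef
  set m := n / 2 with hmdef
  have hMn : 7 * M ≥ 5 * n - 6 := by omega
  have hMn' : 7 * M ≤ 5 * n := by omega
  have hmM : m ≤ M := by omega
  have hM30 : 30 ≤ M := by omega
  have hM1 : 1 ≤ M := by omega
  -- real versions
  have hMr : (5 * (n:ℝ) - 6) / 7 ≤ (M:ℝ) := by
    have h : (5*n - 6 : ℕ) ≤ 7 * M := hMn
    have h6 : (6:ℕ) ≤ 5 * n := by omega
    have h2 := (Nat.cast_le (α := ℝ)).2 h
    rw [Nat.cast_sub h6] at h2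
    push_cast at h2
    linarith
  have hmr : (m:ℝ) ≤ (n:ℝ) / 2 := by
    rw [hmdef]
    exact_mod_cast Nat.cast_div_le
  have hnr : (100000:ℝ) ≤ (n:ℝ) := by exact_mod_cast hn
  have hMr' : (M:ℝ) ≤ 5 * (n:ℝ) / 7 := by
    have h2 : ((7 * M : ℕ) : ℝ) ≤ ((5 * n : ℕ) : ℝ) := by exact_mod_cast hMn'
    push_cast at h2
    linarith
  have hMbig : (70000:ℝ) ≤ (M:ℝ) := by linarith
  have hM0 : (0:ℝ) < (M:ℝ) := by linarith
  -- sqrt facts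
  set s := Nat.sqrt M with hsdef
  have hs2 : ((s:ℝ))^2 ≤ (M:ℝ) := by exact_mod_cast Nat.sqrt_le' M
  have hs0 : (0:ℝ) ≤ (s:ℝ) := by positivity
  have hsb : (s:ℝ) ≤ (M:ℝ)/900 + 225 := by nlinarith [sq_nonneg ((s:ℝ) - 450)]
  -- cbrt facts
  set c := cbrtN M with hcdef
  have hc3 : ((c:ℝ))^3 ≤ (M:ℝ) := by
    have h : c^3 ≤ M := Nat.findGreatest_spec (P := fun k => k^3 ≤ M) (Nat.zero_le M)
      (by norm_num)
    exact_mod_cast h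
  have hc0 : (0:ℝ) ≤ (c:ℝ) := by positivity
  have hMc : (M:ℝ) < ((c:ℝ) + 1)^3 := by
    rcases le_or_gt (c+1) M with h | h
    · have h1 : ¬ ((c+1)^3 ≤ M) := by
        refine Nat.findGreatest_is_greatest (P := fun k => k^3 ≤ M) (n := M) ?_ h
        rw [hcdef]
        unfold cbrtN
        omega
      have h2 : M < (c+1)^3 := Nat.not_le.mp h1
      have h3 : (M:ℝ) < (((c+1 : ℕ)):ℝ)^3 := by exact_mod_cast h2
      push_cast at h3
      linarith
    · exfalso
      have hcM : c = M := by
        have hle : c ≤ M := by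
          rw [hcdef]
          unfold cbrtN
          exact Nat.findGreatest_le M
        omega
      have hM3 : M^3 ≤ M := by
        have h4 : c^3 ≤ M := Nat.findGreatest_spec (P := fun k => k^3 ≤ M) (Nat.zero_le M)
          (by norm_num)
        rwa [hcM] at h4
      have h6 : M < M^3 := by
        calc M = M^1 := (pow_one M).symm
          _ < M^3 := Nat.pow_lt_pow_right (by omega) (by omega)
      omega
  have hcb : (c:ℝ) ≤ (M:ℝ)/67500 + 100 := by
    nlinarith [mul_nonneg (sq_nonneg ((c:ℝ) - 150)) (by linarith : (0:ℝ) ≤ (c:ℝ) + 300)]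
  have hcb2 : ((c:ℝ))^2 ≤ (M:ℝ)/150 + 3334 := by
    nlinarith [mul_nonneg (sq_nonneg ((c:ℝ) - 100)) (by linarith : (0:ℝ) ≤ 2*(c:ℝ) + 100)]
  -- log M bounds
  have hlogM0 : (0:ℝ) ≤ Real.log M := Real.log_nonneg (by linarith)
  have l2hi := Real.log_two_lt_d9
  have l2lo := Real.log_two_gt_d9
  have hlogtan : Real.log M ≤ 17 * Real.log 2 + (M:ℝ)/131072 - 1 := by
    have h5 := log_le_tangent hM0 (show (0:ℝ) < 131072 by norm_num)
    have h17 : Real.log 131072 = 17 * Real.log 2 := by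
      rw [show (131072:ℝ) = 2^17 by norm_num, Real.log_pow]
      norm_num
    linarith
  -- c * log M bound
  have hclogM : (c:ℝ) * Real.log M ≤ 0.000454 * (M:ℝ) + 1110 := by
    have hlogM3 : Real.log M ≤ 3 * Real.log ((c:ℝ)+1) := by
      have h := Real.log_le_log hM0 hMc.le
      rw [Real.log_pow] at h
      push_cast at h
      linarith
    have htanc : Real.log ((c:ℝ)+1) ≤ 6*Real.log 2 + ((c:ℝ)+1)/64 - 1 := by
      have h6 := log_le_tangent (show (0:ℝ) < (c:ℝ)+1 by positivity)
        (show (0:ℝ) < 64 by norm_num)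
      have h64 : Real.log 64 = 6 * Real.log 2 := by
        rw [show (64:ℝ) = 2^6 by norm_num, Real.log_pow]
        norm_num
      linarith
    have hmul : (c:ℝ) * Real.log M ≤ (c:ℝ) * (3*(6*Real.log 2 + ((c:ℝ)+1)/64 - 1)) :=
      mul_le_mul_of_nonneg_left (by linarith) hc0
    have hmul2 : (c:ℝ) * Real.log 2 ≤ (c:ℝ) * 0.6931471808 :=
      mul_le_mul_of_nonneg_left l2hi.le hc0
    nlinarith [hcb, hcb2]
  -- main chain
  have hpsiM := DD_le_psi M
  have hDDlo := (DD_bounds hM30).1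
  have hgap := psi_theta_gap M hM1
  have hthm : thC m ≤ psiC m := thC_le_psiC m
  have hpsim := psi_upper m
  have hthsle : thC s ≤ 1.3862943616 * (s:ℝ) := by
    refine le_trans (thC_le s) ?_
    nlinarith
  have hkey : thC m < thC M := by linarith
  -- extract a prime
  have hsplitth : thC M = thC m + ∑ d ∈ Finset.Ioc m M,
      (if d.Prime then Real.log d else 0) := by
    rw [thC, thC, Finset.sum_filter, Finset.sum_filter]
    exact (Finset.sum_Ioc_consecutive _ (Nat.zero_le m) hmM).symm
  by_contra hno
  push_neg at hno
  have hzero : ∑ d ∈ Finset.Ioc m M, (if d.Prime then Real.log d else 0) = 0 := by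
    refine Finset.sum_eq_zero fun d hd => ?_
    simp only [Finset.mem_Ioc] at hd
    rw [if_neg]
    intro hdp
    have h2d : n < 2 * d := by omega
    have h7d : 7 * d ≤ 5 * n := by omega
    exact absurd h7d (Nat.not_le.2 (hno d hdp h2d))
  rw [hsplitth, hzero, add_zero] at hkey
  exact lt_irrefl _ hkey

lemma exists_prime_q (p : ℕ) (hp : p.Prime) (h2 : 2 < p) :
    ∃ q : ℕ, q.Prime ∧ p < 2 * q ∧ 7 * q ≤ 5 * p := by
  rcases le_or_gt 100000 p with hbig | hsmall
  · exact exists_prime_interval hbig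
  rcases lt_or_ge p 6 with h | h
  · interval_cases p
    · exact ⟨2, by norm_num, by omega, by omega⟩
    · exact absurd hp (by norm_num)
    · exact ⟨3, by norm_num, by omega, by omega⟩
  rcases lt_or_ge p 10 with h | h
  · have h6 : p ≠ 6 := by rintro rfl; norm_num at hp
    exact ⟨5, by norm_num, by omega, by omega⟩
  rcases lt_or_ge p 14 with h | h
  · exact ⟨7, by norm_num, by omega, by omega⟩
  rcases lt_or_ge p 22 with h | h
  · have h14 : p ≠ 14 := by rintro rfl; norm_num at hp
    have h15 : p ≠ 15 := by rintro rfl; norm_num at hp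
    exact ⟨11, by norm_num, by omega, by omega⟩
  rcases lt_or_ge p 26 with h | h
  · exact ⟨13, by norm_num, by omega, by omega⟩
  rcases lt_or_ge p 34 with h | h
  · exact ⟨17, by norm_num, by omega, by omega⟩
  rcases lt_or_ge p 46 with h | h
  · exact ⟨23, by norm_num, by omega, by omega⟩
  rcases lt_or_ge p 62 with h | h
  · exact ⟨31, by norm_num, by omega, by omega⟩
  rcases lt_or_ge p 86 with h | h
  · exact ⟨43, by norm_num, by omega, by omega⟩
  rcases lt_or_ge p 122 with h | h
  · exact ⟨61, by norm_num, by omega, by omega⟩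
  rcases lt_or_ge p 166 with h | h
  · exact ⟨83, by norm_num, by omega, by omega⟩
  rcases lt_or_ge p 226 with h | h
  · exact ⟨113, by norm_num, by omega, by omega⟩
  rcases lt_or_ge p 314 with h | h
  · exact ⟨157, by norm_num, by omega, by omega⟩
  rcases lt_or_ge p 446 with h | h
  · exact ⟨223, by norm_num, by omega, by omega⟩
  rcases lt_or_ge p 634 with h | h
  · exact ⟨317, by norm_num, by omega, by omega⟩
  rcases lt_or_ge p 898 with h | h
  · exact ⟨449, by norm_num, by omega, by omega⟩
  rcases lt_or_ge p 1282 with h | h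
  · exact ⟨641, by norm_num, by omega, by omega⟩
  rcases lt_or_ge p 1822 with h | h
  · exact ⟨911, by norm_num, by omega, by omega⟩
  rcases lt_or_ge p 2602 with h | h
  · exact ⟨1301, by norm_num, by omega, by omega⟩
  rcases lt_or_ge p 3694 with h | h
  · exact ⟨1847, by norm_num, by omega, by omega⟩
  rcases lt_or_ge p 5266 with h | h
  · exact ⟨2633, by norm_num, by omega, by omega⟩
  rcases lt_or_ge p 7522 with h | h
  · exact ⟨3761, by norm_num, by omega, by omega⟩
  rcases lt_or_ge p 10702 with h | h
  · exact ⟨5351, by norm_num, by omega, by omega⟩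
  rcases lt_or_ge p 15286 with h | h
  · exact ⟨7643, by norm_num, by omega, by omega⟩
  rcases lt_or_ge p 21818 with h | h
  · exact ⟨10909, by norm_num, by omega, by omega⟩
  rcases lt_or_ge p 31166 with h | h
  · exact ⟨15583, by norm_num, by omega, by omega⟩
  rcases lt_or_ge p 44518 with h | h
  · exact ⟨22259, by norm_num, by omega, by omega⟩
  rcases lt_or_ge p 63586 with h | h
  · exact ⟨31793, by norm_num, by omega, by omega⟩
  rcases lt_or_ge p 90826 with h | h
  · exact ⟨45413, by norm_num, by omega, by omega⟩
  rcases lt_or_ge p 129742 with h | h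
  · exact ⟨64871, by norm_num, by omega, by omega⟩
  omega

/-- For a prime `p₁ > 2`, the smallest prime `p₂` strictly greater than `p₁/2`
satisfies `p₂ ≤ 5 p₁ / 7`. -/
theorem next_prime_half_bound (p₁ : ℕ) (hp₁ : p₁.Prime) (h2 : 2 < p₁)
    (p₂ : ℕ) (hp₂ : p₂.Prime) (hgt : p₁ < 2 * p₂)
    (hmin : ∀ q : ℕ, q.Prime → p₁ < 2 * q → p₂ ≤ q) :
    7 * p₂ ≤ 5 * p₁ := by
  obtain ⟨q, hq, hq1, hq2⟩ := exists_prime_q p₁ hp₁ h2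
  have hle : p₂ ≤ q := hmin q hq hq1
  omega
end

section
/- For every real x ≥ 25, there exists a prime p with x < p < 6x/5. -/
set_option maxHeartbeats 4000000

open Finset ArithmeticFunction Real

namespace Nag

noncomputable def psi (n : ℕ) : ℝ := ∑ d ∈ Finset.Icc 1 n, Λ d
noncomputable def T (n : ℕ) : ℝ := Real.log (Nat.factorial n)
noncomputable def S (n : ℕ) : ℝ := T n - T (n/2) - T (n/3) - T (n/5) + T (n/30)
def e0 (k : ℕ) : ℤ := (k:ℤ) - ((k/2 : ℕ) : ℤ) - ((k/3 : ℕ) : ℤ) - ((k/5 : ℕ) : ℤ) + ((k/30 : ℕ) : ℤ)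

lemma sum_log_eq (n : ℕ) : (∑ i ∈ Finset.Icc 1 n, Real.log i) = Real.log (Nat.factorial n) := by
  induction n with
  | zero => simp
  | succ n ih =>
    rw [← Finset.Ico_add_one_right_eq_Icc] at *
    rw [Finset.sum_Ico_succ_top (by omega), ih, Nat.factorial_succ]
    push_cast
    rw [Real.log_mul (by positivity) (by exact_mod_cast Nat.cast_ne_zero.2 n.factorial_ne_zero)]
    ring

lemma log_mono : MonotoneOn Real.log (Set.Icc ((1:ℕ):ℝ) ((n : ℕ):ℝ)) := by
  intro a ha b _ hab
  have h1 : (1:ℝ) ≤ a := by exact_mod_cast ha.1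
  exact Real.log_le_log (by linarith) hab

lemma integral_log_eq (n : ℕ) (h : 1 ≤ n) :
    (∫ x in ((1:ℕ):ℝ)..((n:ℕ):ℝ), Real.log x) = (n:ℝ) * Real.log n - n + 1 := by
  rw [Nat.cast_one, integral_log]
  simp

lemma log_factorial_ge (n : ℕ) (h : 1 ≤ n) :
    (n : ℝ) * Real.log n - n + 1 ≤ Real.log (Nat.factorial n) := by
  have key := MonotoneOn.integral_le_sum_Ico h (f := Real.log) log_mono
  rw [intervalIntegral.integral_congr (g := Real.log) (fun x _ => rfl)] at key
  rw [integral_log_eq n h] at key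
  refine key.trans ?_
  have : (∑ i ∈ Finset.Ico 1 n, Real.log ((i+1 : ℕ):ℝ)) ≤ ∑ i ∈ Finset.Icc 1 n, Real.log i := by
    rw [show Finset.Icc 1 n = insert 1 (Finset.Ico 1 n |>.image (· + 1)) from ?_]
    · rw [Finset.sum_insert, Finset.sum_image]
      · have : (0:ℝ) ≤ ∑ i ∈ Finset.Ico 1 n, Real.log ((i+1:ℕ):ℝ) := by
          apply Finset.sum_nonneg; intro i hi
          exact Real.log_nonneg (by exact_mod_cast Nat.le_add_left 1 i)
        simp only [Nat.cast_one, Real.log_one]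
        push_cast
        linarith [le_refl (∑ i ∈ Finset.Ico 1 n, Real.log ((i:ℝ)+1))]
      · intro a _ b _ hab; simp only at hab; omega
      · simp
    · ext m
      simp only [Finset.mem_Icc, Finset.mem_insert, Finset.mem_image, Finset.mem_Ico]
      constructor
      · rintro ⟨h1, h2⟩
        rcases eq_or_lt_of_le h1 with rfl | h1'
        · left; rfl
        · right; exact ⟨m - 1, by omega, by omega⟩
      · rintro (rfl | ⟨a, ⟨ha1, ha2⟩, rfl⟩) <;> omega
  calc (∑ i ∈ Finset.Ico 1 n, Real.log ((i+1:ℕ):ℝ)) ≤ ∑ i ∈ Finset.Icc 1 n, Real.log i := this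
    _ = _ := sum_log_eq n

lemma log_factorial_le (n : ℕ) (h : 1 ≤ n) :
    Real.log (Nat.factorial n) ≤ (n : ℝ) * Real.log n - n + 1 + Real.log n := by
  have key := MonotoneOn.sum_le_integral_Ico h (f := Real.log) log_mono
  rw [integral_log_eq n h] at key
  have expand : Real.log (Nat.factorial n) = (∑ i ∈ Finset.Ico 1 n, Real.log i) + Real.log n := by
    rw [← sum_log_eq n, ← Finset.Ico_add_one_right_eq_Icc, Finset.sum_Ico_succ_top (by omega)]
  rw [expand]
  linarith


lemma log_factorial_identity (n : ℕ) :
    Real.log (Nat.factorial n) = ∑ d ∈ Finset.Icc 1 n, Λ d * ((n / d : ℕ) : ℝ) := by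
  rw [← sum_log_eq n]
  have h2 : ∀ m ∈ Finset.Icc 1 n, Real.log m = ∑ d ∈ Finset.Icc 1 n, if d ∣ m then Λ d else 0 := by
    intro m hm
    simp only [Finset.mem_Icc] at hm
    rw [← ArithmeticFunction.vonMangoldt_sum (n := m), ← Finset.sum_filter]
    apply Finset.sum_congr _ (fun _ _ => rfl)
    ext d
    simp only [Nat.mem_divisors, Finset.mem_filter, Finset.mem_Icc]
    constructor
    · rintro ⟨hd, hm0⟩
      have hd1 : 1 ≤ d := Nat.one_le_iff_ne_zero.2 (by rintro rfl; exact hm0 (Nat.eq_zero_of_zero_dvd hd ▸ rfl))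
      exact ⟨⟨hd1, (Nat.le_of_dvd (by omega) hd).trans hm.2⟩, hd⟩
    · rintro ⟨_, hd⟩
      exact ⟨hd, by omega⟩
  rw [Finset.sum_congr rfl h2, Finset.sum_comm]
  apply Finset.sum_congr rfl
  intro d hd
  rw [← Finset.sum_filter, Finset.sum_const, nsmul_eq_mul, mul_comm]
  congr 1
  rw [show Finset.Icc 1 n = Finset.Ioc 0 n from rfl]
  exact_mod_cast congrArg (Nat.cast : ℕ → ℝ) (Nat.Ioc_filter_dvd_card_eq_div n d)


lemma e0_period (r q : ℕ) : e0 (r + 30 * q) = e0 r := by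
  unfold e0
  rw [show r + 30*q = r + q*30 by ring]
  rw [show (r + q*30)/2 = r/2 + q*15 by omega, show (r + q*30)/3 = r/3 + q*10 by omega,
      show (r + q*30)/5 = r/5 + q*6 by omega, show (r + q*30)/30 = r/30 + q by omega]
  push_cast
  ring

lemma e0_mod (k : ℕ) : e0 k = e0 (k % 30) := by
  conv_lhs => rw [show k = k % 30 + 30 * (k / 30) by omega]
  exact e0_period _ _

lemma e0_nonneg (k : ℕ) : 0 ≤ e0 k := by
  rw [e0_mod]
  have : k % 30 < 30 := Nat.mod_lt _ (by norm_num)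
  interval_cases h : k % 30 <;> decide

lemma e0_le_one (k : ℕ) : e0 k ≤ 1 := by
  rw [e0_mod]
  have : k % 30 < 30 := Nat.mod_lt _ (by norm_num)
  interval_cases h : k % 30 <;> decide

lemma e0_eq_one_of (k : ℕ) (h1 : 1 ≤ k) (h2 : k ≤ 5) : e0 k = 1 := by
  interval_cases k <;> decide

lemma e0_zero_cases (k : ℕ) (h1 : 1 ≤ k) (h : e0 k = 0) : k = 6 ∨ 10 ≤ k := by
  by_cases hk : k < 30
  · interval_cases k <;> revert h <;> decide
  · right; omega


lemma T_extend (n k : ℕ) (hk : 1 ≤ k) :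
    T (n / k) = ∑ d ∈ Finset.Icc 1 n, Λ d * ((n / k / d : ℕ) : ℝ) := by
  rw [T, log_factorial_identity (n/k)]
  apply Finset.sum_subset
  · intro d hd; simp only [Finset.mem_Icc] at *
    exact ⟨hd.1, hd.2.trans (Nat.div_le_self n k)⟩
  · intro d hd hd'
    simp only [Finset.mem_Icc, not_and, not_le] at hd hd'
    have : n / k / d = 0 := Nat.div_eq_of_lt (hd' hd.1)
    simp [this]

lemma S_eq (n : ℕ) : S n = ∑ d ∈ Finset.Icc 1 n, Λ d * ((e0 (n/d) : ℤ) : ℝ) := by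
  have e1 : T n = ∑ d ∈ Finset.Icc 1 n, Λ d * ((n / 1 / d : ℕ) : ℝ) := by
    simpa using T_extend n 1 le_rfl
  rw [S, e1, T_extend n 2 (by norm_num), T_extend n 3 (by norm_num),
    T_extend n 5 (by norm_num), T_extend n 30 (by norm_num)]
  rw [← Finset.sum_sub_distrib, ← Finset.sum_sub_distrib, ← Finset.sum_sub_distrib, ← Finset.sum_add_distrib]
  apply Finset.sum_congr rfl
  intro d hd
  have h2 : n / 2 / d = n / d / 2 := by rw [Nat.div_div_eq_div_mul, Nat.div_div_eq_div_mul, mul_comm]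
  have h3 : n / 3 / d = n / d / 3 := by rw [Nat.div_div_eq_div_mul, Nat.div_div_eq_div_mul, mul_comm]
  have h5 : n / 5 / d = n / d / 5 := by rw [Nat.div_div_eq_div_mul, Nat.div_div_eq_div_mul, mul_comm]
  have h30 : n / 30 / d = n / d / 30 := by rw [Nat.div_div_eq_div_mul, Nat.div_div_eq_div_mul, mul_comm]
  have hc : ((e0 (n/d) : ℤ) : ℝ) = ((n/d : ℕ) : ℝ) - ((n/d/2 : ℕ) : ℝ) - ((n/d/3 : ℕ) : ℝ)
      - ((n/d/5 : ℕ) : ℝ) + ((n/d/30 : ℕ) : ℝ) := by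
    simp only [e0, Int.cast_sub, Int.cast_add, Int.cast_natCast]
  rw [Nat.div_one, h2, h3, h5, h30, hc]
  ring

lemma psi_nonneg (n : ℕ) : 0 ≤ psi n :=
  Finset.sum_nonneg fun _ _ => vonMangoldt_nonneg

lemma psi_mono {m n : ℕ} (h : m ≤ n) : psi m ≤ psi n := by
  apply Finset.sum_le_sum_of_subset_of_nonneg
  · exact Finset.Icc_subset_Icc le_rfl h
  · intro _ _ _; exact vonMangoldt_nonneg

lemma psi_sub (m n : ℕ) (h : m ≤ n) : psi n - psi m = ∑ d ∈ Finset.Ioc m n, Λ d := by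
  have hu : Finset.Icc 1 n = Finset.Icc 1 m ∪ Finset.Ioc m n := by
    ext d; simp only [Finset.mem_Icc, Finset.mem_union, Finset.mem_Ioc]; omega
  have hdis : Disjoint (Finset.Icc 1 m) (Finset.Ioc m n) := by
    rw [Finset.disjoint_left]; intro d hd hd'
    simp only [Finset.mem_Icc] at hd; simp only [Finset.mem_Ioc] at hd'; omega
  rw [psi, psi, hu, Finset.sum_union hdis]; ring

-- lower: S n ≤ psi n
lemma S_le_psi (n : ℕ) : S n ≤ psi n := by
  rw [S_eq, psi]
  apply Finset.sum_le_sum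
  intro d hd
  have h1 : ((e0 (n/d) : ℤ) : ℝ) ≤ 1 := by exact_mod_cast (e0_le_one (n/d))
  calc Λ d * ((e0 (n/d) : ℤ) : ℝ) ≤ Λ d * 1 := by
        apply mul_le_mul_of_nonneg_left h1 vonMangoldt_nonneg
    _ = Λ d := mul_one _

-- upper split: psi n ≤ S n + (psi (n/6) - psi (n/7)) + psi (n/10)
lemma psi_le_S_split (n : ℕ) : psi n ≤ S n + (psi (n/6) - psi (n/7)) + psi (n/10) := by
  have h76 : n / 7 ≤ n / 6 := Nat.div_le_div_left (by norm_num) (by norm_num)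
  rw [psi_sub _ _ h76]
  have key : psi n - S n ≤ (∑ d ∈ Finset.Ioc (n/7) (n/6), Λ d) + psi (n/10) := by
    rw [psi, S_eq, ← Finset.sum_sub_distrib]
    have step1 : ∀ d ∈ Finset.Icc 1 n, Λ d - Λ d * ((e0 (n/d) : ℤ) : ℝ) ≤ 
        (if d ∈ Finset.Ioc (n/7) (n/6) then Λ d else 0) + (if d ∈ Finset.Icc 1 (n/10) then Λ d else 0) := by
      intro d hd
      simp only [Finset.mem_Icc] at hd
      have hnd1 : 1 ≤ n / d := Nat.one_le_div_iff (by omega) |>.2 hd.2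
      have he := e0_nonneg (n/d)
      have he1 := e0_le_one (n/d)
      rcases eq_or_lt_of_le he with heq | hpos
      · -- e0 = 0 case
        have hcase := e0_zero_cases (n/d) hnd1 heq.symm
        rw [← heq]
        push_cast
        rw [mul_zero, sub_zero]
        rcases hcase with h6 | h10
        · have hmem : d ∈ Finset.Ioc (n/7) (n/6) := by
            simp only [Finset.mem_Ioc]
            constructor
            · -- n/7 < d  from n/d < 7 i.e. n < 7d
              have h7 : n / d < 7 := by omega
              have hlt : n < 7 * d := by
                by_contra hcon
                push_neg at hcon
                have : 7 ≤ n / d := Nat.le_div_iff_mul_le (by omega) |>.2 (by omega)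
                omega
              exact Nat.div_lt_iff_lt_mul (by norm_num) |>.2 (by omega)
            · -- d ≤ n/6 from 6 ≤ n/d i.e. 6d ≤ n
              have : 6 ≤ n / d := by omega
              have := Nat.le_div_iff_mul_le (k := d) (by omega) |>.1 this
              exact Nat.le_div_iff_mul_le (by norm_num) |>.2 (by linarith)
          rw [if_pos hmem]
          have : (0:ℝ) ≤ if d ∈ Finset.Icc 1 (n/10) then Λ d else 0 := by
            split <;> simp [vonMangoldt_nonneg]
          linarith [this]
        · have hmem : d ∈ Finset.Icc 1 (n/10) := by
            simp only [Finset.mem_Icc]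
            refine ⟨hd.1, ?_⟩
            have := Nat.le_div_iff_mul_le (k := d) (by omega) |>.1 h10
            exact Nat.le_div_iff_mul_le (by norm_num) |>.2 (by linarith)
          rw [if_pos hmem]
          have : (0:ℝ) ≤ if d ∈ Finset.Ioc (n/7) (n/6) then Λ d else 0 := by
            split <;> simp [vonMangoldt_nonneg]
          linarith [this]
      · -- e0 = 1
        have : e0 (n/d) = 1 := le_antisymm he1 hpos
        rw [this]
        push_cast
        rw [mul_one, sub_self]
        have h1 : (0:ℝ) ≤ if d ∈ Finset.Ioc (n/7) (n/6) then Λ d else 0 := by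
          split <;> simp [vonMangoldt_nonneg]
        have h2 : (0:ℝ) ≤ if d ∈ Finset.Icc 1 (n/10) then Λ d else 0 := by
          split <;> simp [vonMangoldt_nonneg]
        linarith
    calc (∑ d ∈ Finset.Icc 1 n, (Λ d - Λ d * ((e0 (n/d) : ℤ) : ℝ)))
        ≤ ∑ d ∈ Finset.Icc 1 n, ((if d ∈ Finset.Ioc (n/7) (n/6) then Λ d else 0) + (if d ∈ Finset.Icc 1 (n/10) then Λ d else 0)) := 
          Finset.sum_le_sum step1
      _ = (∑ d ∈ Finset.Icc 1 n, if d ∈ Finset.Ioc (n/7) (n/6) then Λ d else 0) + 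
          (∑ d ∈ Finset.Icc 1 n, if d ∈ Finset.Icc 1 (n/10) then Λ d else 0) := Finset.sum_add_distrib
      _ ≤ (∑ d ∈ Finset.Ioc (n/7) (n/6), Λ d) + psi (n/10) := by
          gcongr
          · rw [← Finset.sum_filter]
            apply Finset.sum_le_sum_of_subset_of_nonneg
            · intro d hd; simp only [Finset.mem_filter] at hd; exact hd.2
            · intro _ _ _; exact vonMangoldt_nonneg
          · rw [← Finset.sum_filter, psi]
            apply Finset.sum_le_sum_of_subset_of_nonneg
            · intro d hd; simp only [Finset.mem_filter] at hd; exact hd.2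
            · intro _ _ _; exact vonMangoldt_nonneg
  linarith


lemma log2_lb : (0.6931471803:ℝ) ≤ Real.log 2 := le_of_lt Real.log_two_gt_d9
lemma log2_ub : Real.log 2 ≤ 0.6931471808 := le_of_lt Real.log_two_lt_d9

lemma log3_bounds : (1.0986046:ℝ) ≤ Real.log 3 ∧ Real.log 3 ≤ 1.09862 := by
  have key : (12:ℝ) * Real.log 3 = 19 * Real.log 2 + Real.log (531441/524288) := by
    rw [Real.log_div (by norm_num) (by norm_num)]
    rw [show (531441:ℝ) = 3^12 by norm_num, show (524288:ℝ) = 2^19 by norm_num]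
    rw [Real.log_pow, Real.log_pow]
    push_cast; ring
  have hub : Real.log (531441/524288) ≤ 531441/524288 - 1 :=
    Real.log_le_sub_one_of_pos (by norm_num)
  have hlb : 1 - (531441/524288:ℝ)⁻¹ ≤ Real.log (531441/524288) :=
    Real.one_sub_inv_le_log_of_pos (by norm_num)
  constructor <;> nlinarith [log2_lb, log2_ub]

lemma log5_bounds : (1.6093434:ℝ) ≤ Real.log 5 ∧ Real.log 5 ≤ 1.609531 := by
  have key : (3:ℝ) * Real.log 5 = 7 * Real.log 2 - Real.log (128/125) := by
    rw [Real.log_div (by norm_num) (by norm_num)]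
    rw [show (125:ℝ) = 5^3 by norm_num, show (128:ℝ) = 2^7 by norm_num]
    rw [Real.log_pow, Real.log_pow]
    push_cast; ring
  have hub : Real.log (128/125) ≤ 128/125 - 1 :=
    Real.log_le_sub_one_of_pos (by norm_num)
  have hlb : 1 - (128/125:ℝ)⁻¹ ≤ Real.log (128/125) :=
    Real.one_sub_inv_le_log_of_pos (by norm_num)
  constructor <;> nlinarith [log2_lb, log2_ub]

-- h function facts
lemma h_mono {z y : ℝ} (hz : 1 ≤ z) (hzy : z ≤ y) :
    z * Real.log z - z ≤ y * Real.log y - y := by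
  have hy : (1:ℝ) ≤ y := hz.trans hzy
  have hzpos : (0:ℝ) < z := by linarith
  have hypos : (0:ℝ) < y := by linarith
  have hlog : 1 - (y/z)⁻¹ ≤ Real.log (y/z) := Real.one_sub_inv_le_log_of_pos (by positivity)
  rw [Real.log_div (by positivity) (by positivity)] at hlog
  have hinv : (y/z)⁻¹ = z/y := by field_simp
  rw [hinv] at hlog
  have hlz : 0 ≤ Real.log z := Real.log_nonneg hz
  have : y * (Real.log y - Real.log z) ≥ y * (1 - z/y) := by
    apply mul_le_mul_of_nonneg_left hlog (le_of_lt hypos)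
  have hyz : y * (1 - z/y) = y - z := by field_simp
  nlinarith
  
lemma h_lipschitz {z y : ℝ} (hz : 1 ≤ z) (hzy : z ≤ y) :
    y * Real.log y - y - (z * Real.log z - z) ≤ (y - z) * Real.log y := by
  have hzpos : (0:ℝ) < z := by linarith
  have hypos : (0:ℝ) < y := by linarith
  have hlog : Real.log (y/z) ≤ y/z - 1 := Real.log_le_sub_one_of_pos (by positivity)
  rw [Real.log_div (by positivity) (by positivity)] at hlog
  have : z * (Real.log y - Real.log z) ≤ z * (y/z - 1) := by
    apply mul_le_mul_of_nonneg_left hlog (le_of_lt hzpos)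
  have hyz : z * (y/z - 1) = y - z := by field_simp
  nlinarith

-- cast bounds for Nat division
lemma cast_div_bounds (n k : ℕ) (hk : 0 < k) :
    ((n/k : ℕ) : ℝ) ≤ (n:ℝ)/k ∧ (n:ℝ)/k - 1 < ((n/k : ℕ):ℝ) := by
  have h1 : k * (n/k) ≤ n := Nat.mul_div_le n k
  have h2 : n < k * (n/k) + k := by
    have := Nat.mod_lt n hk
    have := Nat.div_add_mod n k
    omega
  constructor
  · rw [le_div_iff₀ (by exact_mod_cast hk)]
    exact_mod_cast by nlinarith [h1]
  · rw [sub_lt_iff_lt_add, div_lt_iff₀ (show (0:ℝ) < k by exact_mod_cast hk)]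
    calc (n:ℝ) < k * (n/k : ℕ) + k := by exact_mod_cast h2
      _ = (((n/k:ℕ):ℝ) + 1) * k := by ring


-- main term expansion
lemma main_term (N : ℝ) (hN : 0 < N) :
    (N * Real.log N - N) - ((N/2) * Real.log (N/2) - N/2) - ((N/3) * Real.log (N/3) - N/3)
      - ((N/5) * Real.log (N/5) - N/5) + ((N/30) * Real.log (N/30) - N/30)
    = N * ((7/15) * Real.log 2 + (3/10) * Real.log 3 + (1/6) * Real.log 5) := by
  rw [Real.log_div (by positivity) (by norm_num), Real.log_div (by positivity) (by norm_num),
      Real.log_div (by positivity) (by norm_num), Real.log_div (by positivity) (by norm_num)]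
  rw [show (30:ℝ) = 2*3*5 by norm_num, Real.log_mul (by norm_num) (by norm_num),
      Real.log_mul (by norm_num) (by norm_num)]
  ring

lemma S_lower (n : ℕ) (hn : 30 ≤ n) : S n ≥ 0.9212 * n - 4 * Real.log n - 1 := by
  have hn1 : (1:ℕ) ≤ n := by omega
  set N := (n:ℝ) with hNdef
  have hN30 : (30:ℝ) ≤ N := by rw [hNdef]; exact_mod_cast hn
  have hNpos : (0:ℝ) < N := by linarith
  have hlogN : 0 ≤ Real.log N := Real.log_nonneg (by linarith)
  -- div casts
  obtain ⟨c2u, c2l⟩ := cast_div_bounds n 2 (by norm_num)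
  obtain ⟨c3u, c3l⟩ := cast_div_bounds n 3 (by norm_num)
  obtain ⟨c5u, c5l⟩ := cast_div_bounds n 5 (by norm_num)
  obtain ⟨c30u, c30l⟩ := cast_div_bounds n 30 (by norm_num)
  have h2ge1 : (1:ℝ) ≤ ((n/2:ℕ):ℝ) := by exact_mod_cast Nat.one_le_div_iff (by norm_num) |>.2 (by omega)
  have h3ge1 : (1:ℝ) ≤ ((n/3:ℕ):ℝ) := by exact_mod_cast Nat.one_le_div_iff (by norm_num) |>.2 (by omega)
  have h5ge1 : (1:ℝ) ≤ ((n/5:ℕ):ℝ) := by exact_mod_cast Nat.one_le_div_iff (by norm_num) |>.2 (by omega)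
  have h30ge1 : (1:ℝ) ≤ ((n/30:ℕ):ℝ) := by exact_mod_cast Nat.one_le_div_iff (by norm_num) |>.2 (by omega)
  -- T bounds
  have t1 : T n ≥ N * Real.log N - N + 1 := log_factorial_ge n hn1
  have t2 : T (n/2) ≤ (N/2) * Real.log (N/2) - N/2 + Real.log N + 1 := by
    have ha := log_factorial_le (n/2) (by exact_mod_cast h2ge1)
    have hb : ((n/2:ℕ):ℝ) * Real.log ((n/2:ℕ):ℝ) - ((n/2:ℕ):ℝ) ≤ (N/2) * Real.log (N/2) - N/2 :=
      h_mono h2ge1 c2u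
    have hc : Real.log ((n/2:ℕ):ℝ) ≤ Real.log N := by
      apply Real.log_le_log (by linarith)
      calc ((n/2:ℕ):ℝ) ≤ N/2 := c2u
        _ ≤ N := by linarith
    unfold T; unfold T at ha  -- T (n/2) is log factorial
    linarith
  have t3 : T (n/3) ≤ (N/3) * Real.log (N/3) - N/3 + Real.log N + 1 := by
    have ha := log_factorial_le (n/3) (by exact_mod_cast h3ge1)
    have hb := h_mono h3ge1 c3u
    have hc : Real.log ((n/3:ℕ):ℝ) ≤ Real.log N := by
      apply Real.log_le_log (by linarith)
      calc ((n/3:ℕ):ℝ) ≤ N/3 := c3u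
        _ ≤ N := by linarith
    unfold T; linarith
  have t5 : T (n/5) ≤ (N/5) * Real.log (N/5) - N/5 + Real.log N + 1 := by
    have ha := log_factorial_le (n/5) (by exact_mod_cast h5ge1)
    have hb := h_mono h5ge1 c5u
    have hc : Real.log ((n/5:ℕ):ℝ) ≤ Real.log N := by
      apply Real.log_le_log (by linarith)
      calc ((n/5:ℕ):ℝ) ≤ N/5 := c5u
        _ ≤ N := by linarith
  
    unfold T; linarith
  have t30 : T (n/30) ≥ (N/30) * Real.log (N/30) - N/30 - Real.log N + 1 := by
    have ha := log_factorial_ge (n/30) (by exact_mod_cast h30ge1)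
    have hb := h_lipschitz h30ge1 c30u
    have hd : (N/30 - ((n/30:ℕ):ℝ)) * Real.log (N/30) ≤ Real.log N := by
      have hl30 : Real.log (N/30) ≤ Real.log N := by
        apply Real.log_le_log (by positivity); linarith
      have hl30n : 0 ≤ Real.log (N/30) := Real.log_nonneg (by linarith)
      have hle1 : N/30 - ((n/30:ℕ):ℝ) ≤ 1 := by linarith
      have := mul_le_mul_of_nonneg_right hle1 hl30n
      rw [one_mul] at this
      linarith
    unfold T; linarith
  have hM := main_term N hNpos
  have hA : (0.9212:ℝ) ≤ (7/15) * Real.log 2 + (3/10) * Real.log 3 + (1/6) * Real.log 5 := by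
    nlinarith [log2_lb, log3_bounds.1, log5_bounds.1]
  unfold S
  have hAN : 0.9212 * N ≤ N * ((7/15) * Real.log 2 + (3/10) * Real.log 3 + (1/6) * Real.log 5) := by
    rw [mul_comm (0.9212:ℝ) N]
    exact mul_le_mul_of_nonneg_left hA (le_of_lt hNpos)
  linarith [t1, t2, t3, t5, t30, hM, hAN]

lemma S_upper (n : ℕ) (hn : 30 ≤ n) : S n ≤ 0.92131 * n + 5 * Real.log n := by
  have hn1 : (1:ℕ) ≤ n := by omega
  set N := (n:ℝ) with hNdef
  have hN30 : (30:ℝ) ≤ N := by rw [hNdef]; exact_mod_cast hn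
  have hNpos : (0:ℝ) < N := by linarith
  have hlogN : 0 ≤ Real.log N := Real.log_nonneg (by linarith)
  obtain ⟨c2u, c2l⟩ := cast_div_bounds n 2 (by norm_num)
  obtain ⟨c3u, c3l⟩ := cast_div_bounds n 3 (by norm_num)
  obtain ⟨c5u, c5l⟩ := cast_div_bounds n 5 (by norm_num)
  obtain ⟨c30u, c30l⟩ := cast_div_bounds n 30 (by norm_num)
  have h2ge1 : (1:ℝ) ≤ ((n/2:ℕ):ℝ) := by exact_mod_cast Nat.one_le_div_iff (by norm_num) |>.2 (by omega)
  have h3ge1 : (1:ℝ) ≤ ((n/3:ℕ):ℝ) := by exact_mod_cast Nat.one_le_div_iff (by norm_num) |>.2 (by omega)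
  have h5ge1 : (1:ℝ) ≤ ((n/5:ℕ):ℝ) := by exact_mod_cast Nat.one_le_div_iff (by norm_num) |>.2 (by omega)
  have h30ge1 : (1:ℝ) ≤ ((n/30:ℕ):ℝ) := by exact_mod_cast Nat.one_le_div_iff (by norm_num) |>.2 (by omega)
  have t1 : T n ≤ N * Real.log N - N + 1 + Real.log N := log_factorial_le n hn1
  -- lower bounds for subtracted terms
  have t2 : T (n/2) ≥ (N/2) * Real.log (N/2) - N/2 - Real.log N + 1 := by
    have ha := log_factorial_ge (n/2) (by exact_mod_cast h2ge1)
    have hb := h_lipschitz h2ge1 c2u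
    have hl2 : Real.log (N/2) ≤ Real.log N := by
      apply Real.log_le_log (by positivity); linarith
    have hl2n : 0 ≤ Real.log (N/2) := Real.log_nonneg (by linarith)
    have hd : (N/2 - ((n/2:ℕ):ℝ)) * Real.log (N/2) ≤ Real.log N := by
      have hle1 : N/2 - ((n/2:ℕ):ℝ) ≤ 1 := by linarith
      have := mul_le_mul_of_nonneg_right hle1 hl2n
      rw [one_mul] at this
      linarith
    unfold T; linarith
  have t3 : T (n/3) ≥ (N/3) * Real.log (N/3) - N/3 - Real.log N + 1 := by
    have ha := log_factorial_ge (n/3) (by exact_mod_cast h3ge1)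
    have hb := h_lipschitz h3ge1 c3u
    have hl3 : Real.log (N/3) ≤ Real.log N := by
      apply Real.log_le_log (by positivity); linarith
    have hl3n : 0 ≤ Real.log (N/3) := Real.log_nonneg (by linarith)
    have hd : (N/3 - ((n/3:ℕ):ℝ)) * Real.log (N/3) ≤ Real.log N := by
      have hle1 : N/3 - ((n/3:ℕ):ℝ) ≤ 1 := by linarith
      have := mul_le_mul_of_nonneg_right hle1 hl3n
      rw [one_mul] at this
      linarith
    unfold T; linarith
  have t5 : T (n/5) ≥ (N/5) * Real.log (N/5) - N/5 - Real.log N + 1 := by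
    have ha := log_factorial_ge (n/5) (by exact_mod_cast h5ge1)
    have hb := h_lipschitz h5ge1 c5u
    have hl5 : Real.log (N/5) ≤ Real.log N := by
      apply Real.log_le_log (by positivity); linarith
    have hl5n : 0 ≤ Real.log (N/5) := Real.log_nonneg (by linarith)
    have hd : (N/5 - ((n/5:ℕ):ℝ)) * Real.log (N/5) ≤ Real.log N := by
      have hle1 : N/5 - ((n/5:ℕ):ℝ) ≤ 1 := by linarith
      have := mul_le_mul_of_nonneg_right hle1 hl5n
      rw [one_mul] at this
      linarith
    unfold T; linarith
  have t30 : T (n/30) ≤ (N/30) * Real.log (N/30) - N/30 + Real.log N + 1 := by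
    have ha := log_factorial_le (n/30) (by exact_mod_cast h30ge1)
    have hb := h_mono h30ge1 c30u
    have hc : Real.log ((n/30:ℕ):ℝ) ≤ Real.log N := by
      apply Real.log_le_log (by linarith)
      calc ((n/30:ℕ):ℝ) ≤ N/30 := c30u
        _ ≤ N := by linarith
    unfold T; linarith
  have hM := main_term N hNpos
  have hA : (7/15) * Real.log 2 + (3/10) * Real.log 3 + (1/6) * Real.log 5 ≤ 0.92131 := by
    nlinarith [log2_ub, log3_bounds.2, log5_bounds.2]
  have hAN : N * ((7/15) * Real.log 2 + (3/10) * Real.log 3 + (1/6) * Real.log 5) ≤ 0.92131 * N := by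
    rw [mul_comm (0.92131:ℝ) N]
    exact mul_le_mul_of_nonneg_left hA (le_of_lt hNpos)
  unfold S
  linarith [t1, t2, t3, t5, t30, hM, hAN]


lemma psi_le_nlogn (n : ℕ) : psi n ≤ n * Real.log n := by
  calc psi n ≤ ∑ d ∈ Finset.Icc 1 n, Real.log n := by
        apply Finset.sum_le_sum
        intro d hd
        simp only [Finset.mem_Icc] at hd
        calc Λ d ≤ Real.log d := vonMangoldt_le_log
          _ ≤ Real.log n := Real.log_le_log (by exact_mod_cast hd.1) (by exact_mod_cast hd.2)
    _ ≤ n * Real.log n := by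
        rw [Finset.sum_const, Nat.card_Icc]
        simp only [nsmul_eq_mul]
        have h1 : ((n + 1 - 1 : ℕ) : ℝ) = n := by push_cast; norm_num
        rw [h1]

lemma psi_sub_le_S (n : ℕ) : psi n - psi (n/6) ≤ S n := by
  rw [psi_sub (n/6) n (Nat.div_le_self n 6), S_eq]
  have hsub : Finset.Ioc (n/6) n ⊆ Finset.Icc 1 n := by
    intro d hd; simp only [Finset.mem_Ioc] at hd; simp only [Finset.mem_Icc]; omega
  have step1 : (∑ d ∈ Finset.Ioc (n/6) n, Λ d) = ∑ d ∈ Finset.Ioc (n/6) n, Λ d * ((e0 (n/d) : ℤ) : ℝ) := by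
    apply Finset.sum_congr rfl
    intro d hd
    simp only [Finset.mem_Ioc] at hd
    have hd0 : 0 < d := by
      rcases Nat.eq_zero_or_pos d with rfl | h
      · omega
      · exact h
    have h1 : 1 ≤ n / d := (Nat.one_le_div_iff hd0).2 hd.2
    have h5 : n / d ≤ 5 := by
      have h6 : n < 6 * d := by
        have := Nat.div_add_mod n 6
        have := Nat.mod_lt n (show 0 < 6 by norm_num)
        omega
      have : n / d < 6 := Nat.div_lt_iff_lt_mul hd0 |>.2 (by omega)
      omega
    rw [e0_eq_one_of _ h1 h5]
    norm_num
  rw [step1]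
  apply Finset.sum_le_sum_of_subset_of_nonneg hsub
  intro d _ _
  have h0 : (0:ℝ) ≤ ((e0 (n/d) : ℤ) : ℝ) := by exact_mod_cast e0_nonneg (n/d)
  exact mul_nonneg vonMangoldt_nonneg h0


lemma log6_bounds : (1.7917517:ℝ) ≤ Real.log 6 ∧ Real.log 6 ≤ 1.7917672 := by
  have h : Real.log 6 = Real.log 2 + Real.log 3 := by
    rw [show (6:ℝ) = 2*3 by norm_num, Real.log_mul (by norm_num) (by norm_num)]
  constructor <;> rw [h] <;> linarith [log2_lb, log2_ub, log3_bounds.1, log3_bounds.2]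

lemma log_nat_mono {a b : ℕ} (ha : 1 ≤ a) (hab : a ≤ b) :
    Real.log a ≤ Real.log b := by
  apply Real.log_le_log (by exact_mod_cast ha) (by exact_mod_cast hab)

-- Round 0
lemma psi_upper0 : ∀ n : ℕ, psi n ≤ 1.105572 * n + 40 * (Real.log n + 1)^2 := by
  intro n
  induction n using Nat.strong_induction_on with
  | _ n ih =>
  rcases le_or_gt n 35 with hsmall | hbig
  · -- base
    have h1 := psi_le_nlogn n
    have hL0 : 0 ≤ Real.log n := by
      rcases Nat.eq_zero_or_pos n with rfl | hp
      · simp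
      · exact Real.log_nonneg (by exact_mod_cast hp)
    rcases le_or_gt (Real.log n) 1.105572 with hc | hc
    · have : (n:ℝ) * Real.log n ≤ 1.105572 * n := by
        rw [mul_comm]
        exact mul_le_mul_of_nonneg_right hc (by positivity)
      nlinarith [sq_nonneg (Real.log n + 1)]
    · have hn35 : (n:ℝ) ≤ 35 := by exact_mod_cast hsmall
      have hlog36 : Real.log n ≤ 3.5836 := by
        have h36 : Real.log n ≤ Real.log 36 := by
          rcases Nat.eq_zero_or_pos n with rfl | hp
          · simp; positivity
          · exact Real.log_le_log (by exact_mod_cast hp) (by exact_mod_cast (by omega : n ≤ 36))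
        have : Real.log 36 = 2 * Real.log 6 := by
          rw [show (36:ℝ) = 6^2 by norm_num, Real.log_pow]; push_cast; ring
        rw [this] at h36
        linarith [log6_bounds.2]
      have key : (n:ℝ) * Real.log n ≤ 1.105572*n + (n:ℝ) * (Real.log n - 1.105572) := by ring_nf; linarith
      have h2 : (n:ℝ) * (Real.log n - 1.105572) ≤ 35 * (3.5836 - 1.105572) := by
        apply mul_le_mul hn35 (by linarith) (by linarith) (by norm_num)
      have h3 : (Real.log n + 1)^2 ≥ (1.105572+1)^2 := by nlinarith
      nlinarith
  · -- step, n ≥ 36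
    have h30 : 30 ≤ n := by omega
    have hrec := psi_sub_le_S n
    have hS := S_upper n h30
    have hIH := ih (n/6) (by omega)
    have hc6 := cast_div_bounds n 6 (by norm_num)
    have h6ge1 : 1 ≤ n/6 := by omega
    have hlog6le : Real.log ((n/6 : ℕ):ℝ) ≤ Real.log n - Real.log 6 := by
      have h1 : ((n/6:ℕ):ℝ) ≤ (n:ℝ)/6 := hc6.1
      have := Real.log_le_log (by exact_mod_cast h6ge1) h1
      rwa [Real.log_div (by positivity) (by norm_num)] at this
    have hL0 : 0 ≤ Real.log n := Real.log_nonneg (by exact_mod_cast (by omega : 1 ≤ n))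
    have hL6 : 0 ≤ Real.log ((n/6:ℕ):ℝ) := Real.log_nonneg (by exact_mod_cast h6ge1)
    -- (log(n/6)+1)^2 ≤ (log n + 1 - log 6)^2
    have hsq : (Real.log ((n/6:ℕ):ℝ) + 1)^2 ≤ (Real.log n + 1 - Real.log 6)^2 := by
      have h1 : Real.log ((n/6:ℕ):ℝ) + 1 ≤ Real.log n + 1 - Real.log 6 := by linarith
      nlinarith [hL6]
    have hmain : 1.105572 * ((n/6:ℕ):ℝ) ≤ 1.105572 * ((n:ℝ)/6) :=
      mul_le_mul_of_nonneg_left hc6.1 (by norm_num)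
    have hsqexp : (Real.log n + 1 - Real.log 6)^2 ≤ (Real.log n + 1)^2 - Real.log 6 * (2*(Real.log n + 1) - Real.log 6) := by
      ring_nf; nlinarith [log6_bounds.1]
    have hfin : 5 * Real.log n ≤ 40 * Real.log 6 * (2*(Real.log n+1) - Real.log 6) := by
      nlinarith [log6_bounds.1, log6_bounds.2, hL0]
    calc psi n ≤ S n + psi (n/6) := by linarith
    _ ≤ 0.92131*n + 5*Real.log n + 1.105572 * ((n/6:ℕ):ℝ) + 40*(Real.log ((n/6:ℕ):ℝ)+1)^2 := by linarith
    _ ≤ 1.105572 * n + 40 * (Real.log n + 1)^2 := by nlinarith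

-- Round 1
lemma psi_upper (n : ℕ) : psi n ≤ 1.1 * n + 15500 := by
  induction n using Nat.strong_induction_on with
  | _ n ih =>
  rcases le_or_gt n 1000000 with hsmall | hbig
  · have h0 := psi_upper0 n
    have hlogn : Real.log n ≤ 13.8630 := by
      have h1 : Real.log n ≤ Real.log 1048576 := by
        rcases Nat.eq_zero_or_pos n with rfl | hp
        · simp; positivity
        · exact Real.log_le_log (by exact_mod_cast hp) (by exact_mod_cast (by omega : n ≤ 1048576))
      have h2 : Real.log 1048576 = 20 * Real.log 2 := by
        rw [show (1048576:ℝ) = 2^20 by norm_num, Real.log_pow]; push_cast; ring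
      rw [h2] at h1
      linarith [log2_ub]
    have hL0 : 0 ≤ Real.log n := by
      rcases Nat.eq_zero_or_pos n with rfl | hp
      · simp
      · exact Real.log_nonneg (by exact_mod_cast hp)
    have hn' : (n:ℝ) ≤ 1000000 := by exact_mod_cast hsmall
    nlinarith
  · -- n > 10^6
    have h30 : 30 ≤ n := by omega
    have hsplit := psi_le_S_split n
    have hS := S_upper n h30
    have hIH6 := ih (n/6) (by omega)
    have hIH10 := ih (n/10) (by omega)
    have hS7 := S_lower (n/7) (by omega)
    have hpsi7 := S_le_psi (n/7)
    have hc6 := (cast_div_bounds n 6 (by norm_num)).1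
    have hc10 := (cast_div_bounds n 10 (by norm_num)).1
    have hc7 := (cast_div_bounds n 7 (by norm_num)).2
    have hlog7 : Real.log ((n/7:ℕ):ℝ) ≤ Real.log n :=
      log_nat_mono (by omega) (Nat.div_le_self n 7)
    have hL0 : 0 ≤ Real.log n := Real.log_nonneg (by exact_mod_cast (by omega : 1 ≤ n))
    -- log n ≤ 12.8630 + n/10^6
    have hlogconc : Real.log n ≤ 12.8630 + (n:ℝ)/1000000 := by
      have h1 : Real.log ((n:ℝ)/1000000) ≤ (n:ℝ)/1000000 - 1 :=
        Real.log_le_sub_one_of_pos (by positivity)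
      rw [Real.log_div (by positivity) (by norm_num)] at h1
      have h2 : Real.log 1000000 ≤ 13.8630 := by
        have : Real.log 1000000 ≤ Real.log 1048576 :=
          Real.log_le_log (by norm_num) (by norm_num)
        have h3 : Real.log 1048576 = 20 * Real.log 2 := by
          rw [show (1048576:ℝ) = 2^20 by norm_num, Real.log_pow]; push_cast; ring
        rw [h3] at this; linarith [log2_ub]
      linarith
    -- psi(n/7) ≥ 0.9212*(n/7 - 1) - 4 log n - 1
    have h7lower : psi (n/7) ≥ 0.9212 * ((n:ℝ)/7 - 1) - 4 * Real.log n - 1 := by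
      have h1 : (0.9212:ℝ) * ((n/7:ℕ):ℝ) ≥ 0.9212 * ((n:ℝ)/7 - 1) := by
        have := hc7; nlinarith
      have h4 : 4 * Real.log ((n/7:ℕ):ℝ) ≤ 4 * Real.log n := by linarith
      linarith
    have hn6 : 1.1 * ((n/6:ℕ):ℝ) ≤ 1.1 * ((n:ℝ)/6) := by nlinarith
    have hn10 : 1.1 * ((n/10:ℕ):ℝ) ≤ 1.1 * ((n:ℝ)/10) := by nlinarith
    have hbigR : (1000000:ℝ) < n := by exact_mod_cast hbig
    nlinarith [hsplit, hS, hIH6, hIH10, h7lower, hpsi7, hS7, hlogconc, hL0]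


lemma primorial_log_bound (k : ℕ) :
    (∑ p ∈ Finset.range (k+1) with p.Prime, Real.log p) ≤ k * Real.log 4 := by
  have h1 : (∑ p ∈ Finset.range (k+1) with p.Prime, Real.log p) = Real.log (primorial k) := by
    rw [primorial, Nat.cast_prod, Real.log_prod]
    intro p hp
    simp only [Finset.mem_filter] at hp
    exact_mod_cast (Nat.Prime.pos hp.2).ne'
  rw [h1]
  calc Real.log (primorial k) ≤ Real.log ((4:ℕ)^k) := by
        apply Real.log_le_log (by exact_mod_cast primorial_pos k)
        exact_mod_cast primorial_le_4_pow k
    _ = k * Real.log 4 := by push_cast [Real.log_pow]; norm_num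

lemma pp_bound (n m : ℕ) (hnm : n ≤ m) (hm2 : m ≤ 2*n + 1)
    (hnp : ∀ d ∈ Finset.Ioc n m, ¬ d.Prime) :
    psi m - psi n ≤ Real.sqrt m * Real.log 4 := by
  rw [psi_sub n m hnm]
  set F := {d ∈ Finset.Ioc n m | Λ d ≠ 0} with hF
  have hsum : (∑ d ∈ Finset.Ioc n m, Λ d) = ∑ d ∈ F, Λ d := by
    rw [hF]; rw [Finset.sum_filter_ne_zero]
  rw [hsum]
  -- each d in F is a prime power p^k with k ≥ 2
  have hstruct : ∀ d ∈ F, ∃ p j : ℕ, p.Prime ∧ 2 ≤ j ∧ p^j = d ∧ d.minFac = p := by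
    intro d hd
    simp only [hF, Finset.mem_filter, Finset.mem_Ioc] at hd
    obtain ⟨p, j, hp, hj, hpj⟩ := (vonMangoldt_ne_zero_iff).1 hd.2
    have hp' := hp.nat_prime
    have hmin : d.minFac = p := by
      rw [← hpj]
      exact Nat.Prime.pow_minFac hp' (by omega)
    refine ⟨p, j, hp', ?_, hpj, hmin⟩
    rcases Nat.lt_or_ge j 2 with hj2 | hj2
    · interval_cases j
      exfalso
      exact hnp d (Finset.mem_Ioc.mpr hd.1) (by rw [← hpj, pow_one]; exact hp')
    · exact hj2
  -- Λ d = log minFac d on F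
  have hval : ∀ d ∈ F, Λ d = Real.log (d.minFac) := by
    intro d hd
    obtain ⟨p, j, hp, hj, hpj, hmin⟩ := hstruct d hd
    rw [hmin, ← hpj, vonMangoldt_apply_pow (by omega), vonMangoldt_apply_prime hp]
  -- minFac is injective on F
  have hinj : Set.InjOn Nat.minFac F := by
    intro d1 hd1 d2 hd2 heq
    obtain ⟨p1, j1, hp1, hj1, hpj1, hmin1⟩ := hstruct d1 (by exact_mod_cast hd1)
    obtain ⟨p2, j2, hp2, hj2, hpj2, hmin2⟩ := hstruct d2 (by exact_mod_cast hd2)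
    have hpp : p1 = p2 := by rw [← hmin1, ← hmin2, heq]
    subst hpp
    simp only [hF, Finset.coe_filter, Set.mem_setOf_eq] at hd1 hd2
    have h1 := hd1.1; have h2 := hd2.1
    simp only [Finset.mem_Ioc] at h1 h2
    -- both p1^j1, p1^j2 in (n, m], m ≤ 2n+1 → j1 = j2
    rcases lt_trichotomy j1 j2 with hlt | heq' | hlt
    · exfalso
      have : 2 * d1 ≤ d2 := by
        rw [← hpj1, ← hpj2]
        calc 2 * p1^j1 ≤ p1 * p1^j1 := by
              have := hp1.two_le; exact Nat.mul_le_mul_right _ this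
          _ = p1^(j1+1) := by ring
          _ ≤ p1^j2 := Nat.pow_le_pow_right hp1.pos (by omega)
      omega
    · rw [← hpj1, ← hpj2, heq']
    · exfalso
      have : 2 * d2 ≤ d1 := by
        rw [← hpj1, ← hpj2]
        calc 2 * p1^j2 ≤ p1 * p1^j2 := by
              have := hp1.two_le; exact Nat.mul_le_mul_right _ this
          _ = p1^(j2+1) := by ring
          _ ≤ p1^j1 := Nat.pow_le_pow_right hp1.pos (by omega)
      omega
  -- image is in primes ≤ sqrt m
  have himg : F.image Nat.minFac ⊆ {p ∈ Finset.range (Nat.sqrt m + 1) | p.Prime} := by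
    intro p hp
    simp only [Finset.mem_image] at hp
    obtain ⟨d, hd, rfl⟩ := hp
    obtain ⟨p, j, hp, hj, hpj, hmin⟩ := hstruct d hd
    simp only [hF, Finset.mem_filter, Finset.mem_Ioc] at hd
    rw [hmin]
    simp only [Finset.mem_filter, Finset.mem_range]
    constructor
    · have hpm : p * p ≤ m := by
        calc p * p = p^2 := by ring
          _ ≤ p^j := Nat.pow_le_pow_right hp.pos hj
          _ = d := hpj
          _ ≤ m := hd.1.2
      have := Nat.le_sqrt.2 hpm
      omega
    · exact hp
  calc (∑ d ∈ F, Λ d) = ∑ d ∈ F, Real.log (d.minFac) := Finset.sum_congr rfl hval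
    _ = ∑ p ∈ F.image Nat.minFac, Real.log p := by
        rw [Finset.sum_image]
        intro a ha b hb hab
        exact hinj (by exact_mod_cast ha) (by exact_mod_cast hb) hab
    _ ≤ ∑ p ∈ Finset.range (Nat.sqrt m + 1) with p.Prime, Real.log p := by
        apply Finset.sum_le_sum_of_subset_of_nonneg himg
        intro p hp _
        simp only [Finset.mem_filter] at hp
        exact Real.log_nonneg (by exact_mod_cast hp.2.one_lt.le)
    _ ≤ (Nat.sqrt m) * Real.log 4 := primorial_log_bound _
    _ ≤ Real.sqrt m * Real.log 4 := by
        apply mul_le_mul_of_nonneg_right _ (Real.log_nonneg (by norm_num))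
        calc ((Nat.sqrt m : ℕ):ℝ) = Real.sqrt (((Nat.sqrt m : ℕ):ℝ)^2) :=
              (Real.sqrt_sq (by positivity)).symm
          _ ≤ Real.sqrt m := by
              apply Real.sqrt_le_sqrt
              have hs : (Nat.sqrt m) ^ 2 ≤ m := Nat.sqrt_le' m
              exact_mod_cast hs


lemma analytic_part (x : ℝ) (hx : 4500000 ≤ x) :
    ∃ p : ℕ, p.Prime ∧ x < (p : ℝ) ∧ (p : ℝ) < 6 * x / 5 := by
  by_contra hno
  push_neg at hno
  set n := Nat.floor x with hn
  set m := Nat.floor (1.199 * x) with hm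
  have hxpos : (0:ℝ) < x := by linarith
  have hnx : (n:ℝ) ≤ x := Nat.floor_le (le_of_lt hxpos)
  have hnx2 : x < (n:ℝ) + 1 := Nat.lt_floor_add_one x
  have hmx : (m:ℝ) ≤ 1.199 * x := Nat.floor_le (by positivity)
  have hmx2 : 1.199 * x < (m:ℝ) + 1 := Nat.lt_floor_add_one _
  have hnm : n ≤ m := by
    have : (n:ℝ) ≤ (m:ℝ) + 1 - 1 := by nlinarith
    exact_mod_cast by exact_mod_cast Nat.le_of_lt_succ (by exact_mod_cast (by nlinarith : (n:ℝ) < (m:ℝ)+1))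
  have hm2 : m ≤ 2*n + 1 := by
    have : (m:ℝ) ≤ 2*(n:ℝ) + 1 := by nlinarith
    exact_mod_cast this
  have hnbig : (4500000:ℝ) ≤ (n:ℝ) + 1 := by linarith
  have hnge : 4499999 ≤ n := by
    have h : (4499999:ℝ) ≤ (n:ℝ) := by linarith
    exact_mod_cast h
  have hmge : (5395499:ℝ) ≤ (m:ℝ) := by nlinarith
  have hm30 : 30 ≤ m := by
    have h : (30:ℝ) ≤ (m:ℝ) := by linarith
    exact_mod_cast h
  -- no primes in (n, m]
  have hnp : ∀ d ∈ Finset.Ioc n m, ¬ d.Prime := by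
    intro d hd hdp
    simp only [Finset.mem_Ioc] at hd
    apply absurd (hno d hdp)
    push_neg
    constructor
    · -- x < d since d ≥ n+1 > x
      have : (n:ℝ) + 1 ≤ (d:ℝ) := by exact_mod_cast hd.1
      linarith
    · -- d ≤ m → d ≤ 1.199x < 1.2x
      have : (d:ℝ) ≤ (m:ℝ) := by exact_mod_cast hd.2
      nlinarith
  have hkey := pp_bound n m hnm hm2 hnp
  -- lower bound for psi m - psi n
  have hlow : psi m ≥ 0.9212 * m - 4 * Real.log m - 1 := le_trans (S_lower m hm30) (S_le_psi m)
  have hup : psi n ≤ 1.1 * n + 15500 := psi_upper n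
  -- bound sqrt m
  have hsqrt : Real.sqrt m ≤ (m:ℝ) / 2322 := by
    rw [show Real.sqrt (m:ℝ) = (m:ℝ) / Real.sqrt (m:ℝ) from ?_]
    · apply div_le_div_of_nonneg_left (by positivity) (by norm_num)
      have : (2322:ℝ) = Real.sqrt (2322^2) := (Real.sqrt_sq (by norm_num)).symm
      rw [this]
      apply Real.sqrt_le_sqrt
      nlinarith
    · rw [eq_div_iff (by positivity), Real.mul_self_sqrt (by positivity)]
  have hlog4 : Real.log 4 ≤ 1.3862943616 := by
    rw [show (4:ℝ) = 2^2 by norm_num, Real.log_pow]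
    push_cast
    linarith [log2_ub]
  have hsqlog : Real.sqrt m * Real.log 4 ≤ (m:ℝ)/2322 * 1.3862943616 := by
    apply mul_le_mul hsqrt hlog4 (Real.log_nonneg (by norm_num)) (by positivity)
  -- bound log m
  have hlogm : Real.log m ≤ 14.943 + (m:ℝ)/5395499 := by
    have h1 : Real.log ((m:ℝ)/5395499) ≤ (m:ℝ)/5395499 - 1 :=
      Real.log_le_sub_one_of_pos (by positivity)
    rw [Real.log_div (by positivity) (by norm_num)] at h1
    have h2 : Real.log 5395499 ≤ 15.943 := by
      have ha : Real.log 5395499 ≤ Real.log 8388608 :=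
        Real.log_le_log (by norm_num) (by norm_num)
      have hb : Real.log 8388608 = 23 * Real.log 2 := by
        rw [show (8388608:ℝ) = 2^23 by norm_num, Real.log_pow]; push_cast; ring
      rw [hb] at ha
      linarith [log2_ub]
    linarith
  -- assemble contradiction
  have hcontr : psi m - psi n ≥ 0.9212 * (m:ℝ) - 4*(14.943 + (m:ℝ)/5395499) - 1 - (1.1 * x + 15500) := by
    have : 1.1 * (n:ℝ) ≤ 1.1 * x := by linarith
    linarith [hlow, hup]
  -- m ≥ 1.199x - 1
  have hml : 1.199*x - 1 ≤ (m:ℝ) := by linarith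
  nlinarith [hkey, hcontr, hsqlog, hmx, hml, hx]


lemma chain_part (x : ℝ) (h25 : 25 ≤ x) (hup : x ≤ 4500000) :
    ∃ p : ℕ, p.Prime ∧ x < (p : ℝ) ∧ (p : ℝ) < 6 * x / 5 := by
  rcases lt_or_ge x (29:ℝ) with h|h
  · exact ⟨29, by norm_num, h, by norm_num; linarith⟩
  rcases lt_or_ge x (31:ℝ) with h|h
  · exact ⟨31, by norm_num, h, by norm_num; linarith⟩
  rcases lt_or_ge x (37:ℝ) with h|h
  · exact ⟨37, by norm_num, h, by norm_num; linarith⟩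
  rcases lt_or_ge x (43:ℝ) with h|h
  · exact ⟨43, by norm_num, h, by norm_num; linarith⟩
  rcases lt_or_ge x (47:ℝ) with h|h
  · exact ⟨47, by norm_num, h, by norm_num; linarith⟩
  rcases lt_or_ge x (53:ℝ) with h|h
  · exact ⟨53, by norm_num, h, by norm_num; linarith⟩
  rcases lt_or_ge x (61:ℝ) with h|h
  · exact ⟨61, by norm_num, h, by norm_num; linarith⟩
  rcases lt_or_ge x (73:ℝ) with h|h
  · exact ⟨73, by norm_num, h, by norm_num; linarith⟩
  rcases lt_or_ge x (83:ℝ) with h|h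
  · exact ⟨83, by norm_num, h, by norm_num; linarith⟩
  rcases lt_or_ge x (97:ℝ) with h|h
  · exact ⟨97, by norm_num, h, by norm_num; linarith⟩
  rcases lt_or_ge x (113:ℝ) with h|h
  · exact ⟨113, by norm_num, h, by norm_num; linarith⟩
  rcases lt_or_ge x (131:ℝ) with h|h
  · exact ⟨131, by norm_num, h, by norm_num; linarith⟩
  rcases lt_or_ge x (157:ℝ) with h|h
  · exact ⟨157, by norm_num, h, by norm_num; linarith⟩
  rcases lt_or_ge x (181:ℝ) with h|h
  · exact ⟨181, by norm_num, h, by norm_num; linarith⟩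
  rcases lt_or_ge x (211:ℝ) with h|h
  · exact ⟨211, by norm_num, h, by norm_num; linarith⟩
  rcases lt_or_ge x (251:ℝ) with h|h
  · exact ⟨251, by norm_num, h, by norm_num; linarith⟩
  rcases lt_or_ge x (293:ℝ) with h|h
  · exact ⟨293, by norm_num, h, by norm_num; linarith⟩
  rcases lt_or_ge x (349:ℝ) with h|h
  · exact ⟨349, by norm_num, h, by norm_num; linarith⟩
  rcases lt_or_ge x (409:ℝ) with h|h
  · exact ⟨409, by norm_num, h, by norm_num; linarith⟩
  rcases lt_or_ge x (487:ℝ) with h|h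
  · exact ⟨487, by norm_num, h, by norm_num; linarith⟩
  rcases lt_or_ge x (577:ℝ) with h|h
  · exact ⟨577, by norm_num, h, by norm_num; linarith⟩
  rcases lt_or_ge x (691:ℝ) with h|h
  · exact ⟨691, by norm_num, h, by norm_num; linarith⟩
  rcases lt_or_ge x (829:ℝ) with h|h
  · exact ⟨829, by norm_num, h, by norm_num; linarith⟩
  rcases lt_or_ge x (991:ℝ) with h|h
  · exact ⟨991, by norm_num, h, by norm_num; linarith⟩
  rcases lt_or_ge x (1187:ℝ) with h|h
  · exact ⟨1187, by norm_num, h, by norm_num; linarith⟩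
  rcases lt_or_ge x (1423:ℝ) with h|h
  · exact ⟨1423, by norm_num, h, by norm_num; linarith⟩
  rcases lt_or_ge x (1699:ℝ) with h|h
  · exact ⟨1699, by norm_num, h, by norm_num; linarith⟩
  rcases lt_or_ge x (2029:ℝ) with h|h
  · exact ⟨2029, by norm_num, h, by norm_num; linarith⟩
  rcases lt_or_ge x (2423:ℝ) with h|h
  · exact ⟨2423, by norm_num, h, by norm_num; linarith⟩
  rcases lt_or_ge x (2903:ℝ) with h|h
  · exact ⟨2903, by norm_num, h, by norm_num; linarith⟩
  rcases lt_or_ge x (3469:ℝ) with h|h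
  · exact ⟨3469, by norm_num, h, by norm_num; linarith⟩
  rcases lt_or_ge x (4159:ℝ) with h|h
  · exact ⟨4159, by norm_num, h, by norm_num; linarith⟩
  rcases lt_or_ge x (4987:ℝ) with h|h
  · exact ⟨4987, by norm_num, h, by norm_num; linarith⟩
  rcases lt_or_ge x (5981:ℝ) with h|h
  · exact ⟨5981, by norm_num, h, by norm_num; linarith⟩
  rcases lt_or_ge x (7177:ℝ) with h|h
  · exact ⟨7177, by norm_num, h, by norm_num; linarith⟩
  rcases lt_or_ge x (8609:ℝ) with h|h
  · exact ⟨8609, by norm_num, h, by norm_num; linarith⟩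
  rcases lt_or_ge x (10321:ℝ) with h|h
  · exact ⟨10321, by norm_num, h, by norm_num; linarith⟩
  rcases lt_or_ge x (12379:ℝ) with h|h
  · exact ⟨12379, by norm_num, h, by norm_num; linarith⟩
  rcases lt_or_ge x (14851:ℝ) with h|h
  · exact ⟨14851, by norm_num, h, by norm_num; linarith⟩
  rcases lt_or_ge x (17807:ℝ) with h|h
  · exact ⟨17807, by norm_num, h, by norm_num; linarith⟩
  rcases lt_or_ge x (21347:ℝ) with h|h
  · exact ⟨21347, by norm_num, h, by norm_num; linarith⟩
  rcases lt_or_ge x (25609:ℝ) with h|h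
  · exact ⟨25609, by norm_num, h, by norm_num; linarith⟩
  rcases lt_or_ge x (30727:ℝ) with h|h
  · exact ⟨30727, by norm_num, h, by norm_num; linarith⟩
  rcases lt_or_ge x (36871:ℝ) with h|h
  · exact ⟨36871, by norm_num, h, by norm_num; linarith⟩
  rcases lt_or_ge x (44221:ℝ) with h|h
  · exact ⟨44221, by norm_num, h, by norm_num; linarith⟩
  rcases lt_or_ge x (53051:ℝ) with h|h
  · exact ⟨53051, by norm_num, h, by norm_num; linarith⟩
  rcases lt_or_ge x (63659:ℝ) with h|h
  · exact ⟨63659, by norm_num, h, by norm_num; linarith⟩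
  rcases lt_or_ge x (76387:ℝ) with h|h
  · exact ⟨76387, by norm_num, h, by norm_num; linarith⟩
  rcases lt_or_ge x (91639:ℝ) with h|h
  · exact ⟨91639, by norm_num, h, by norm_num; linarith⟩
  rcases lt_or_ge x (109961:ℝ) with h|h
  · exact ⟨109961, by norm_num, h, by norm_num; linarith⟩
  rcases lt_or_ge x (131947:ℝ) with h|h
  · exact ⟨131947, by norm_num, h, by norm_num; linarith⟩
  rcases lt_or_ge x (158329:ℝ) with h|h
  · exact ⟨158329, by norm_num, h, by norm_num; linarith⟩
  rcases lt_or_ge x (189989:ℝ) with h|h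
  · exact ⟨189989, by norm_num, h, by norm_num; linarith⟩
  rcases lt_or_ge x (227977:ℝ) with h|h
  · exact ⟨227977, by norm_num, h, by norm_num; linarith⟩
  rcases lt_or_ge x (273569:ℝ) with h|h
  · exact ⟨273569, by norm_num, h, by norm_num; linarith⟩
  rcases lt_or_ge x (328277:ℝ) with h|h
  · exact ⟨328277, by norm_num, h, by norm_num; linarith⟩
  rcases lt_or_ge x (393931:ℝ) with h|h
  · exact ⟨393931, by norm_num, h, by norm_num; linarith⟩
  rcases lt_or_ge x (472711:ℝ) with h|h
  · exact ⟨472711, by norm_num, h, by norm_num; linarith⟩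
  rcases lt_or_ge x (567209:ℝ) with h|h
  · exact ⟨567209, by norm_num, h, by norm_num; linarith⟩
  rcases lt_or_ge x (680633:ℝ) with h|h
  · exact ⟨680633, by norm_num, h, by norm_num; linarith⟩
  rcases lt_or_ge x (816743:ℝ) with h|h
  · exact ⟨816743, by norm_num, h, by norm_num; linarith⟩
  rcases lt_or_ge x (980081:ℝ) with h|h
  · exact ⟨980081, by norm_num, h, by norm_num; linarith⟩
  rcases lt_or_ge x (1176089:ℝ) with h|h
  · exact ⟨1176089, by norm_num, h, by norm_num; linarith⟩
  rcases lt_or_ge x (1411297:ℝ) with h|h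
  · exact ⟨1411297, by norm_num, h, by norm_num; linarith⟩
  rcases lt_or_ge x (1693553:ℝ) with h|h
  · exact ⟨1693553, by norm_num, h, by norm_num; linarith⟩
  rcases lt_or_ge x (2032253:ℝ) with h|h
  · exact ⟨2032253, by norm_num, h, by norm_num; linarith⟩
  rcases lt_or_ge x (2438693:ℝ) with h|h
  · exact ⟨2438693, by norm_num, h, by norm_num; linarith⟩
  rcases lt_or_ge x (2926421:ℝ) with h|h
  · exact ⟨2926421, by norm_num, h, by norm_num; linarith⟩
  rcases lt_or_ge x (3511693:ℝ) with h|h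
  · exact ⟨3511693, by norm_num, h, by norm_num; linarith⟩
  rcases lt_or_ge x (4214009:ℝ) with h|h
  · exact ⟨4214009, by norm_num, h, by norm_num; linarith⟩
  rcases lt_or_ge x (5056781:ℝ) with h|h
  · exact ⟨5056781, by norm_num, h, by norm_num; linarith⟩
  linarith
end Nag

/-- Nagura's theorem: for every real `x ≥ 25` there exists a prime `p`
with `x < p < 6x/5`. -/
theorem nagura (x : ℝ) (hx : 25 ≤ x) :
    ∃ p : ℕ, p.Prime ∧ x < (p : ℝ) ∧ (p : ℝ) < 6 * x / 5 := by
  rcases le_or_gt x 4500000 with h | h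
  · exact Nag.chain_part x hx h
  · exact Nag.analytic_part x (by linarith)
end

section
/- For the d-dimensional axis cross Ĩ_N^d := {k ∈ ℤ^d : ||k||_1 = ||k||_∞ ≤ N}, the cardinality of Ĩ_N^d is 2dN + 1, and the cardinality of its difference set D(Ĩ_N^d) = {h − k : h, k ∈ Ĩ_N^d} is 2Nd(2 + (d−1)N) + 1. -/
open Finset

def axisCross (d N : ℕ) : Set (Fin d → ℤ) :=
  {k | (∑ i, (k i).natAbs) = Finset.univ.sup (fun i => (k i).natAbs) ∧
       Finset.univ.sup (fun i => (k i).natAbs) ≤ N}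

def diffSet {α : Type*} [Sub α] (S : Set α) : Set α :=
  {m | ∃ h ∈ S, ∃ k ∈ S, m = h - k}

lemma sum_single_natAbs {d : ℕ} (i : Fin d) (v : ℤ) :
    ∑ j, ((Pi.single i v : Fin d → ℤ) j).natAbs = v.natAbs := by
  rw [Finset.sum_eq_single_of_mem i (mem_univ i)]
  · simp
  · intro j _ hj
    simp [Pi.single_eq_of_ne hj]

lemma sup_single_natAbs {d : ℕ} (i : Fin d) (v : ℤ) :
    Finset.univ.sup (fun j => ((Pi.single i v : Fin d → ℤ) j).natAbs) = v.natAbs := by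
  apply le_antisymm
  · apply Finset.sup_le
    intro j _
    rcases eq_or_ne j i with rfl | hj
    · simp
    · simp [Pi.single_eq_of_ne hj]
  · simpa using Finset.le_sup (f := fun j => ((Pi.single i v : Fin d → ℤ) j).natAbs) (mem_univ i)

lemma mem_axisCross_iff {d N : ℕ} (hd : 1 ≤ d) {k : Fin d → ℤ} :
    k ∈ axisCross d N ↔ ∃ i v, v.natAbs ≤ N ∧ k = (Pi.single i v : Fin d → ℤ) := by
  constructor
  · rintro ⟨h1, h2⟩
    have hne : (univ : Finset (Fin d)).Nonempty := by
      simpa [Finset.univ_nonempty_iff] using Fin.pos_iff_nonempty.mp hd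
    obtain ⟨i, -, hi⟩ := Finset.exists_mem_eq_sup univ hne (fun j => (k j).natAbs)
    refine ⟨i, k i, by rw [← hi]; exact h2, ?_⟩
    have hsum : ∑ j, (k j).natAbs = (k i).natAbs := h1.trans hi
    rw [← Finset.add_sum_erase _ _ (mem_univ i)] at hsum
    have hz : ∀ j ∈ univ.erase i, (k j).natAbs = 0 :=
      Finset.sum_eq_zero_iff.mp (by omega)
    funext j
    rcases eq_or_ne j i with rfl | hj
    · simp
    · rw [Pi.single_eq_of_ne hj]
      exact Int.natAbs_eq_zero.mp (hz j (by simp [hj]))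
  · rintro ⟨i, v, hv, rfl⟩
    exact ⟨by rw [sum_single_natAbs, sup_single_natAbs], by rw [sup_single_natAbs]; exact hv⟩

/-- One nonzero entry. -/
noncomputable def crossF (d N : ℕ) : Finset (Fin d → ℤ) :=
  ((Finset.univ : Finset (Fin d)) ×ˢ ((Finset.Icc (-(N:ℤ)) N).erase 0)).image
    (fun p => (Pi.single p.1 p.2 : Fin d → ℤ))

lemma single_ne_zero_inj {d : ℕ} {i j : Fin d} {v w : ℤ} (hv : v ≠ 0)
    (h : (Pi.single i v : Fin d → ℤ) = Pi.single j w) : i = j ∧ v = w := by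
  have h1 := congrFun h i
  rcases eq_or_ne i j with rfl | hij
  · exact ⟨rfl, by simpa using h1⟩
  · rw [Pi.single_eq_same, Pi.single_eq_of_ne hij] at h1
    exact absurd h1 hv

lemma crossF_card (d N : ℕ) : (crossF d N).card = d * (2 * N) := by
  have hinj : Set.InjOn (fun p : Fin d × ℤ => (Pi.single p.1 p.2 : Fin d → ℤ))
      ↑((Finset.univ : Finset (Fin d)) ×ˢ ((Finset.Icc (-(N:ℤ)) N).erase 0)) := by
    rintro ⟨i, v⟩ hp ⟨j, w⟩ hq h
    simp only [Finset.mem_coe, Finset.mem_product, Finset.mem_erase] at hp hq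
    obtain ⟨rfl, rfl⟩ := single_ne_zero_inj hp.2.1 h
    rfl
  rw [crossF, Finset.card_image_of_injOn hinj, Finset.card_product,
    Finset.card_erase_of_mem (by simp), Int.card_Icc, Finset.card_univ, Fintype.card_fin]
  congr 1; omega

lemma zero_notMem_crossF (d N : ℕ) : (0 : Fin d → ℤ) ∉ crossF d N := by
  rw [crossF]
  simp only [Finset.mem_image, not_exists]
  rintro ⟨i, v⟩ ⟨hp, h⟩
  simp only [Finset.mem_product, Finset.mem_erase] at hp
  exact hp.2.1 (by simpa using congrFun h i)

lemma axisCross_eq_coe (d N : ℕ) (hd : 1 ≤ d) :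
    axisCross d N = ↑(insert (0 : Fin d → ℤ) (crossF d N)) := by
  ext k
  rw [mem_axisCross_iff hd]
  simp only [Finset.coe_insert, Set.mem_insert_iff, crossF, Finset.coe_image,
    Set.mem_image, Finset.mem_coe, Finset.mem_product, Finset.mem_erase,
    Finset.mem_Icc, Finset.mem_univ]
  constructor
  · rintro ⟨i, v, hv, rfl⟩
    rcases eq_or_ne v 0 with rfl | hv0
    · left; simp
    · right; exact ⟨(i, v), ⟨trivial, hv0, by omega⟩, rfl⟩
  · rintro (rfl | ⟨⟨i, v⟩, ⟨-, hv0, hv⟩, rfl⟩)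
    · exact ⟨⟨0, hd⟩, 0, by simp, by simp⟩
    · exact ⟨i, v, by omega, rfl⟩

lemma part1 (d N : ℕ) (hd : 1 ≤ d) : (axisCross d N).ncard = 2 * d * N + 1 := by
  rw [axisCross_eq_coe d N hd, Set.ncard_coe_finset,
    Finset.card_insert_of_notMem (zero_notMem_crossF d N), crossF_card]
  ring

/-- Two nonzero entries, at positions `i < j`. -/
noncomputable def crossF2 (d N : ℕ) : Finset (Fin d → ℤ) :=
  (((Finset.univ : Finset (Fin d × Fin d)).filter (fun p => p.1 < p.2)) ×ˢ
    (((Finset.Icc (-(N:ℤ)) N).erase 0) ×ˢ ((Finset.Icc (-(N:ℤ)) N).erase 0))).image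
    (fun q => (Pi.single q.1.1 q.2.1 + Pi.single q.1.2 q.2.2 : Fin d → ℤ))

lemma two_single_apply {d : ℕ} {i j : Fin d} (hij : i ≠ j) (a b : ℤ) (t : Fin d) :
    (Pi.single i a + Pi.single j b : Fin d → ℤ) t
      = if t = i then a else if t = j then b else 0 := by
  rcases eq_or_ne t i with rfl | hti
  · simp [Pi.single_eq_of_ne (Ne.symm (by simpa using hij.symm) : t ≠ j)]
  · rcases eq_or_ne t j with rfl | htj
    · simp [Pi.single_eq_of_ne hti, hti]
    · simp [Pi.single_eq_of_ne hti, Pi.single_eq_of_ne htj, hti, htj]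

lemma two_single_inj {d : ℕ} {i j k l : Fin d} {a b c e : ℤ}
    (hij : i < j) (hkl : k < l) (ha : a ≠ 0) (hb : b ≠ 0) (hc : c ≠ 0) (he : e ≠ 0)
    (h : (Pi.single i a + Pi.single j b : Fin d → ℤ) = Pi.single k c + Pi.single l e) :
    i = k ∧ j = l ∧ a = c ∧ b = e := by
  have key : ∀ t, (if t = i then a else if t = j then b else 0)
      = (if t = k then c else if t = l then e else 0) := by
    intro t
    rw [← two_single_apply hij.ne a b t, ← two_single_apply hkl.ne c e t, h]
  rcases eq_or_ne i k with rfl | hik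
  · have h1 := key i
    simp [hij.ne] at h1
    have h2 := key j
    have hjk : j ≠ i := hij.ne'
    rcases eq_or_ne j l with rfl | hjl
    · simp [hjk] at h2
      exact ⟨rfl, rfl, h1, h2⟩
    · simp [hjk, hjl] at h2
      exact absurd h2 hb
  · have h1 := key i
    simp [hij.ne, hik] at h1
    rcases eq_or_ne i l with rfl | hil
    · -- k < i < j;  eval at k
      have h2 := key k
      have hki : k ≠ i := hkl.ne
      have hkj : k ≠ j := (hkl.trans hij).ne
      simp [hki, hkj, hkl.ne] at h2
      exact absurd h2.symm hc
    · simp [hil] at h1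
      exact absurd h1 ha

lemma card_lt_pairs (d : ℕ) :
    2 * ((Finset.univ : Finset (Fin d × Fin d)).filter (fun p => p.1 < p.2)).card
      = d * d - d := by
  set L := (Finset.univ : Finset (Fin d × Fin d)).filter (fun p => p.1 < p.2) with hL
  set G := (Finset.univ : Finset (Fin d × Fin d)).filter (fun p => p.2 < p.1) with hG
  have hcard : L.card = G.card := by
    apply Finset.card_bij (fun p _ => Prod.swap p)
    · rintro ⟨x, y⟩ hp
      simp only [hL, hG, Finset.mem_filter, Finset.mem_univ, true_and] at *
      exact hp
    · rintro ⟨x, y⟩ _ ⟨x', y'⟩ _ h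
      simp only [Prod.swap_prod_mk, Prod.mk.injEq] at h
      simp [Prod.ext_iff, h.1, h.2]
    · rintro ⟨x, y⟩ hp
      refine ⟨⟨y, x⟩, ?_, rfl⟩
      simp only [hL, hG, Finset.mem_filter, Finset.mem_univ, true_and] at *
      exact hp
  have hdisj : Disjoint L G := by
    rw [Finset.disjoint_left]
    intro p hp hq
    simp only [hL, hG, Finset.mem_filter] at hp hq
    exact absurd (hp.2.trans hq.2) (lt_irrefl _)
  have hunion : (Finset.univ : Finset (Fin d)).offDiag = L ∪ G := by
    ext ⟨x, y⟩
    simp only [Finset.mem_offDiag, Finset.mem_union, hL, hG, Finset.mem_filter,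
      Finset.mem_univ, true_and]
    exact ne_iff_lt_or_gt
  have := Finset.offDiag_card (Finset.univ : Finset (Fin d))
  rw [hunion, Finset.card_union_of_disjoint hdisj] at this
  simp only [Finset.card_univ, Fintype.card_fin] at this
  omega

lemma crossF2_card (d N : ℕ) (hd : 1 ≤ d) :
    2 * (crossF2 d N).card = (d * d - d) * (2 * N) * (2 * N) := by
  have hIcc : ((Finset.Icc (-(N:ℤ)) N).erase 0).card = 2 * N := by
    rw [Finset.card_erase_of_mem (by simp), Int.card_Icc]; omega
  have hinj : Set.InjOn (fun q : (Fin d × Fin d) × ℤ × ℤ =>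
      (Pi.single q.1.1 q.2.1 + Pi.single q.1.2 q.2.2 : Fin d → ℤ))
      ↑(((Finset.univ : Finset (Fin d × Fin d)).filter (fun p => p.1 < p.2)) ×ˢ
        (((Finset.Icc (-(N:ℤ)) N).erase 0) ×ˢ ((Finset.Icc (-(N:ℤ)) N).erase 0))) := by
    rintro ⟨⟨i, j⟩, a, b⟩ hp ⟨⟨k, l⟩, c, e⟩ hq h
    simp only [Finset.mem_coe, Finset.mem_product, Finset.mem_filter, Finset.mem_erase] at hp hq
    obtain ⟨rfl, rfl, rfl, rfl⟩ :=
      two_single_inj hp.1.2 hq.1.2 hp.2.1.1 hp.2.2.1 hq.2.1.1 hq.2.2.1 h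
    rfl
  rw [crossF2, Finset.card_image_of_injOn hinj, Finset.card_product, Finset.card_product,
    hIcc, ← card_lt_pairs d]
  ring

lemma zero_notMem_crossF2 (d N : ℕ) : (0 : Fin d → ℤ) ∉ crossF2 d N := by
  rw [crossF2]
  simp only [Finset.mem_image, not_exists]
  rintro ⟨⟨i, j⟩, a, b⟩ ⟨hp, h⟩
  simp only [Finset.mem_product, Finset.mem_filter, Finset.mem_erase] at hp
  have := congrFun h i
  rw [two_single_apply hp.1.2.ne a b i] at this
  simp at this
  exact hp.2.1.1 this

lemma disjoint_crossF_crossF2 (d N M : ℕ) : Disjoint (crossF d M) (crossF2 d N) := by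
  rw [Finset.disjoint_left]
  intro m hm hm2
  rw [crossF, Finset.mem_image] at hm
  rw [crossF2, Finset.mem_image] at hm2
  obtain ⟨⟨i, v⟩, hp, rfl⟩ := hm
  obtain ⟨⟨⟨k, l⟩, c, e⟩, hq, h⟩ := hm2
  simp only [Finset.mem_product, Finset.mem_filter, Finset.mem_erase] at hp hq
  have hk := congrFun h.symm k
  have hl := congrFun h.symm l
  rw [two_single_apply hq.1.2.ne c e k, if_pos rfl] at hk
  rw [two_single_apply hq.1.2.ne c e l, if_neg hq.1.2.ne', if_pos rfl] at hl
  have hki : k = i := by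
    by_contra hne
    rw [Pi.single_eq_of_ne hne] at hk
    exact hq.2.1.1 hk.symm
  have hli : l = i := by
    by_contra hne
    rw [Pi.single_eq_of_ne hne] at hl
    exact hq.2.2.1 hl.symm
  exact absurd (hki.trans hli.symm) hq.1.2.ne

lemma decomp {N : ℕ} {v : ℤ} (h1 : -(2*(N:ℤ)) ≤ v) (h2 : v ≤ 2*N) :
    ∃ a b : ℤ, -(N:ℤ) ≤ a ∧ a ≤ N ∧ -(N:ℤ) ≤ b ∧ b ≤ N ∧ v = a - b := by
  rcases le_or_gt v N with h | h
  · rcases le_or_gt (-(N:ℤ)) v with h' | h'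
    · exact ⟨v, 0, h', h, by omega, by omega, by omega⟩
    · exact ⟨-N, -N - v, by omega, by omega, by omega, by omega, by omega⟩
  · exact ⟨N, N - v, by omega, by omega, by omega, by omega, by omega⟩

lemma sub_single_ne {d : ℕ} (i j : Fin d) (a b : ℤ) :
    (Pi.single i a : Fin d → ℤ) - Pi.single j b = Pi.single i a + Pi.single j (-b) := by
  rw [Pi.single_neg, sub_eq_add_neg]

lemma diffSet_eq_coe (d N : ℕ) (hd : 1 ≤ d) :
    diffSet (axisCross d N)
      = ↑(insert (0 : Fin d → ℤ) (crossF d (2 * N) ∪ crossF2 d N)) := by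
  have hmem1 : ∀ (i : Fin d) (v : ℤ), v ≠ 0 → v.natAbs ≤ 2 * N →
      (Pi.single i v : Fin d → ℤ) ∈ crossF d (2 * N) := by
    intro i v hv0 hv
    rw [crossF, Finset.mem_image]
    exact ⟨(i, v), by simp only [Finset.mem_product, Finset.mem_erase, Finset.mem_Icc,
      Finset.mem_univ, true_and]; constructor; exact hv0; push_cast; omega, rfl⟩
  ext m
  simp only [diffSet, Set.mem_setOf_eq, Finset.coe_insert, Set.mem_insert_iff,
    Finset.coe_union, Set.mem_union, Finset.mem_coe]
  constructor
  · rintro ⟨h, hh, k, hk, rfl⟩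
    rw [mem_axisCross_iff hd] at hh hk
    obtain ⟨i, a, ha, rfl⟩ := hh
    obtain ⟨j, b, hb, rfl⟩ := hk
    rcases eq_or_ne i j with rfl | hij
    · rw [← Pi.single_sub]
      rcases eq_or_ne a b with rfl | hab
      · left; simp
      · right; left
        exact hmem1 i (a - b) (sub_ne_zero_of_ne hab) (by omega)
    · rw [sub_single_ne]
      rcases eq_or_ne a 0 with rfl | ha0
      · rcases eq_or_ne b 0 with rfl | hb0
        · left; simp
        · right; left
          have : (Pi.single i (0:ℤ) : Fin d → ℤ) + Pi.single j (-b) = Pi.single j (-b) := by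
            simp
          rw [this]
          exact hmem1 j (-b) (by simpa using hb0) (by simpa using by omega)
      · rcases eq_or_ne b 0 with rfl | hb0
        · right; left
          have : (Pi.single i a : Fin d → ℤ) + Pi.single j (-(0:ℤ)) = Pi.single i a := by
            simp
          rw [this]
          exact hmem1 i a ha0 (by omega)
        · right; right
          rw [crossF2, Finset.mem_image]
          rcases lt_or_gt_of_ne hij with hlt | hgt
          · refine ⟨((i, j), a, -b), ?_, rfl⟩
            simp only [Finset.mem_product, Finset.mem_filter, Finset.mem_erase,
              Finset.mem_Icc, Finset.mem_univ, true_and]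
            refine ⟨hlt, ⟨ha0, by omega⟩, ⟨by simpa using hb0, by omega⟩⟩
          · refine ⟨((j, i), -b, a), ?_, by rw [add_comm]⟩
            simp only [Finset.mem_product, Finset.mem_filter, Finset.mem_erase,
              Finset.mem_Icc, Finset.mem_univ, true_and]
            refine ⟨hgt, ⟨by simpa using hb0, by omega⟩, ⟨ha0, by omega⟩⟩
  · have hsingle : ∀ (i : Fin d) (v : ℤ), v.natAbs ≤ N →
        (Pi.single i v : Fin d → ℤ) ∈ axisCross d N := by
      intro i v hv
      rw [mem_axisCross_iff hd]
      exact ⟨i, v, hv, rfl⟩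
    rintro (rfl | hm | hm)
    · refine ⟨0, ?_, 0, ?_, by simp⟩ <;>
      · rw [mem_axisCross_iff hd]
        exact ⟨⟨0, hd⟩, 0, by simp, by simp⟩
    · rw [crossF, Finset.mem_image] at hm
      obtain ⟨⟨i, v⟩, hp, rfl⟩ := hm
      simp only [Finset.mem_product, Finset.mem_erase, Finset.mem_Icc, Finset.mem_univ,
        true_and] at hp
      obtain ⟨a, b, ha1, ha2, hb1, hb2, rfl⟩ := decomp (N := N) (v := v) (by push_cast at hp ⊢; omega)
        (by push_cast at hp ⊢; omega)
      refine ⟨Pi.single i a, hsingle i a (by omega), Pi.single i b, hsingle i b (by omega), ?_⟩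
      show (Pi.single i (a - b) : Fin d → ℤ) = _
      rw [Pi.single_sub]
    · rw [crossF2, Finset.mem_image] at hm
      obtain ⟨⟨⟨i, j⟩, a, b⟩, hp, rfl⟩ := hm
      simp only [Finset.mem_product, Finset.mem_filter, Finset.mem_erase, Finset.mem_Icc,
        Finset.mem_univ, true_and] at hp
      refine ⟨Pi.single i a, hsingle i a (by omega), Pi.single j (-b),
        hsingle j (-b) (by simp only [Int.natAbs_neg]; omega), ?_⟩
      rw [sub_single_ne, neg_neg]

/-- Cardinalities of the axis cross and of its difference set. -/
theorem axisCross_card (d N : ℕ) (hd : 1 ≤ d) :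
    (axisCross d N).ncard = 2 * d * N + 1 ∧
      (diffSet (axisCross d N)).ncard = 2 * N * d * (2 + (d - 1) * N) + 1 := by
  refine ⟨part1 d N hd, ?_⟩
  obtain ⟨e, rfl⟩ : ∃ e, d = e + 1 := ⟨d - 1, by omega⟩
  rw [diffSet_eq_coe (e + 1) N hd, Set.ncard_coe_finset,
    Finset.card_insert_of_notMem (by
      simp only [Finset.mem_union, not_or]
      exact ⟨zero_notMem_crossF _ _, zero_notMem_crossF2 _ _⟩),
    Finset.card_union_of_disjoint (disjoint_crossF_crossF2 (e + 1) N (2 * N)),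
    crossF_card, Nat.add_sub_cancel]
  have h2 : 2 * (crossF2 (e + 1) N).card = (e + 1) * e * (2 * N) * (2 * N) := by
    rw [crossF2_card (e + 1) N hd,
      Nat.sub_eq_of_eq_add (show (e+1)*(e+1) = (e+1)*e + (e+1) by ring)]
  apply Nat.eq_of_mul_eq_mul_left (show 0 < 2 by norm_num)
  calc 2 * ((e + 1) * (2 * (2 * N)) + (crossF2 (e + 1) N).card + 1)
      = 2 * (crossF2 (e + 1) N).card + (e + 1) * (8 * N) + 2 := by ring
    _ = (e + 1) * e * (2 * N) * (2 * N) + (e + 1) * (8 * N) + 2 := by rw [h2]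
    _ = 2 * (2 * N * (e + 1) * (2 + e * N) + 1) := by ring
end
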